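/- arXiv:1512.07371 — 2 statements merged into one kernel-verified Lean document; each statement's English description precedes it below -/
import Mathlib

section
/- Fix a positive integer k and let C = {0, 1, …, k−1, ω}. Let n⃗ = (n_1, …, n_m) with all n_j ∈ C. If T and T′ are rooted trees such that for every j ∈ Σ_k, T has n_j rootchildren v with EV[T(v)] = j and T′ has n_j rootchildren v′ with EV[T′(v′)] = j (where the value ω means 'at least k' and a value n < ω means 'exactly n'), then T ≡_k T′; consequently EV[T] is uniquely determined by n⃗. -/
open FirstOrder MeasureTheory
open scoped Classical

/-! ### Rooted trees -/

/-- A rooted tree: a set of finite sequences of naturals (addresses of vertices),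
containing the root `[]` and closed under passing to the parent (`List.dropLast`). -/
structure RTree where
  carrier : Set (List ℕ)
  root_mem : [] ∈ carrier
  dropLast_mem : ∀ v ∈ carrier, v.dropLast ∈ carrier

namespace RTree

/-- The first-order language of rooted trees: a constant symbol `R` (the root) and a
unary function symbol `π` (the parent function). -/
def treeLang : FirstOrder.Language where
  Functions := fun n => match n with
    | 0 => Unit
    | 1 => Unit
    | _ => Empty
  Relations := fun _ => Empty

/-- The type of vertices of a rooted tree. -/
def V (T : RTree) : Type := {v : List ℕ // v ∈ T.carrier}

/-- The root, as a vertex. -/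
def rootV (T : RTree) : T.V := ⟨[], T.root_mem⟩

/-- The parent of a vertex (the root is its own parent). -/
def parentV (T : RTree) (v : T.V) : T.V := ⟨v.1.dropLast, T.dropLast_mem _ v.2⟩

/-- A rooted tree as a structure for the language of rooted trees: the constant is
interpreted as the root and the unary function as the parent function (fixing the
root, where the parent is undefined). -/
noncomputable instance treeStructure (T : RTree) : treeLang.Structure T.V where
  funMap {n} f x :=
    match n, f, x with
    | 0, _, _ => rootV T
    | 1, _, x => parentV T (x 0)
  RelMap {n} r := nomatch r

end RTree

namespace FirstOrder.Language

/-- The quantifier depth of a first-order formula: the depth of nesting of its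
quantifiers. -/
def BoundedFormula.qdepth {L : FirstOrder.Language} {α : Type*} :
    ∀ {n}, L.BoundedFormula α n → ℕ
  | _, .falsum => 0
  | _, .equal _ _ => 0
  | _, .rel _ _ => 0
  | _, .imp f g => max f.qdepth g.qdepth
  | _, .all f => f.qdepth + 1

end FirstOrder.Language

namespace RTree

/-- Two rooted trees are `≡ₖ`-equivalent if they agree on all first-order sentences of
quantifier depth at most `k`. -/
def TreeEquiv (k : ℕ) (T T' : RTree) : Prop :=
  ∀ A : treeLang.Sentence, A.qdepth ≤ k → (T.V ⊨ A ↔ T'.V ⊨ A)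

/-- `≡ₖ` as an equivalence relation (setoid) on rooted trees. -/
def treeSetoid (k : ℕ) : Setoid RTree where
  r := TreeEquiv k
  iseqv := ⟨fun _ _ _ => Iff.rfl, fun h A hA => (h A hA).symm,
    fun h h' A hA => (h A hA).trans (h' A hA)⟩

/-- `Σₖ`: the set of `≡ₖ`-equivalence classes of rooted trees. -/
def TreeClass (k : ℕ) : Type := Quotient (treeSetoid k)

/-- The Ehrenfeucht value of a rooted tree: its `≡ₖ`-equivalence class. -/
def EV (k : ℕ) (T : RTree) : TreeClass k := Quotient.mk (treeSetoid k) T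

/-- `T(v)`: the subtree of `T` consisting of `v` and all its descendants, rooted
at `v`. -/
def subtreeAt (T : RTree) (v : List ℕ) (hv : v ∈ T.carrier) : RTree where
  carrier := {w | v ++ w ∈ T.carrier}
  root_mem := by simpa using hv
  dropLast_mem := fun w hw => by
    rcases eq_or_ne w [] with h | h
    · subst h; simpa using hv
    · have h2 := T.dropLast_mem _ hw
      rwa [List.dropLast_append_of_ne_nil h] at h2

/-- The number of elements of `S`, truncated at `k` (so the value `k` means
"at least `k`", i.e. `ω`). -/
noncomputable def truncCount (k : ℕ) (S : Set ℕ) : ℕ := (min (k : ℕ∞) S.encard).toNat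

/-- The truncated number of rootchildren `v` of `T` with `EV[T(v)] = j`; a value
`< k` is the exact count, while the value `k` stands for `ω`, i.e. "at least `k`". -/
noncomputable def childClassCount (k : ℕ) (T : RTree) (j : TreeClass k) : ℕ :=
  truncCount k {i : ℕ | ∃ h : [i] ∈ T.carrier, EV k (T.subtreeAt [i] h) = j}

end RTree

namespace RTree

open FirstOrder Language

/-! ### Basic vertex lemmas -/

/-- Iterated parent. -/
def parIter (T : RTree) (p : ℕ) (v : T.V) : T.V := (parentV T)^[p] v

lemma parIter_zero (T : RTree) (v : T.V) : parIter T 0 v = v := rfl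

lemma parIter_succ (T : RTree) (p : ℕ) (v : T.V) :
    parIter T (p + 1) v = parentV T (parIter T p v) :=
  Function.iterate_succ_apply' _ _ _

lemma val_parentV (T : RTree) (v : T.V) :
    (parentV T v).1 = v.1.take (v.1.length - 1) := by
  show v.1.dropLast = _
  rw [List.dropLast_eq_take]

lemma val_parIter (T : RTree) (p : ℕ) (v : T.V) :
    (parIter T p v).1 = v.1.take (v.1.length - p) := by
  induction p with
  | zero => simp [parIter_zero]
  | succ p ih =>
      rw [parIter_succ, val_parentV, ih, List.length_take, List.take_take]
      congr 1
      omega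

lemma eq_rootV_iff {T : RTree} (v : T.V) : v = rootV T ↔ v.1 = [] := by
  constructor
  · rintro rfl; rfl
  · intro h; apply Subtype.ext; exact h

lemma parIter_eq_rootV_iff {T : RTree} (p : ℕ) (v : T.V) :
    parIter T p v = rootV T ↔ v.1.length ≤ p := by
  rw [eq_rootV_iff, val_parIter, List.take_eq_nil_iff]
  constructor
  · rintro (h | h)
    · omega
    · simp [h]
  · intro h; left; omega

lemma parIter_rootV (T : RTree) (p : ℕ) : parIter T p (rootV T) = rootV T := by
  rw [parIter_eq_rootV_iff]; simp [rootV]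

/-! ### Children and subtrees -/

/-- `v` lies in the subtree of the rootchild `[i]`. -/
def inSub (T : RTree) (i : ℕ) (v : T.V) : Prop := [i] <+: v.1

lemma not_inSub_rootV (T : RTree) (i : ℕ) : ¬ inSub T i (rootV T) := by
  rintro ⟨t, ht⟩; simp [rootV] at ht

lemma inSub_unique {T : RTree} {i j : ℕ} {v : T.V} (hi : inSub T i v) (hj : inSub T j v) :
    i = j := by
  obtain ⟨t, ht⟩ := hi; obtain ⟨s, hs⟩ := hj
  rw [← hs] at ht
  simpa using (List.head_eq_of_cons_eq (by simpa using ht) : i = j)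

lemma ne_rootV_of_inSub {T : RTree} {i : ℕ} {v : T.V} (h : inSub T i v) : v ≠ rootV T := by
  intro hv; rw [hv] at h; exact not_inSub_rootV T i h

lemma take_mem_carrier {T : RTree} (v : T.V) (m : ℕ) : v.1.take m ∈ T.carrier := by
  rcases le_or_gt m v.1.length with h | h
  · have := (parIter T (v.1.length - m) v).2
    rwa [val_parIter, (by omega : v.1.length - (v.1.length - m) = m)] at this
  · rw [List.take_of_length_le (by omega)]; exact v.2

lemma exists_child_of_ne_rootV {T : RTree} {v : T.V} (h : v ≠ rootV T) :
    ∃ i : ℕ, [i] ∈ T.carrier ∧ inSub T i v := by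
  rw [ne_eq, eq_rootV_iff] at h
  obtain ⟨a, t, hat⟩ := List.exists_cons_of_ne_nil h
  refine ⟨a, ?_, ⟨t, by rw [hat]; rfl⟩⟩
  have := take_mem_carrier v 1
  rwa [hat, List.take_succ_cons, List.take_zero] at this

/-- The global vertex corresponding to a vertex of the subtree at rootchild `[i]`. -/
def up {T : RTree} {i : ℕ} (hi : [i] ∈ T.carrier) (w : (T.subtreeAt [i] hi).V) : T.V :=
  ⟨i :: w.1, w.2⟩

/-- The vertex of the subtree at rootchild `[i]` corresponding to a global vertex
(vertices outside the subtree are sent to the subtree's root). -/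
noncomputable def down {T : RTree} {i : ℕ} (hi : [i] ∈ T.carrier) (v : T.V) :
    (T.subtreeAt [i] hi).V :=
  if h : inSub T i v then
    ⟨v.1.tail, by
      obtain ⟨t, ht⟩ := h
      have : v.1 = i :: t := by rw [← ht]; rfl
      show [i] ++ v.1.tail ∈ T.carrier
      rw [this]
      exact (this ▸ v.2 : (i :: t) ∈ T.carrier)⟩
  else rootV _

lemma val_up {T : RTree} {i : ℕ} (hi : [i] ∈ T.carrier) (w : (T.subtreeAt [i] hi).V) :
    (up hi w).1 = i :: w.1 := rfl

lemma up_ne_rootV {T : RTree} {i : ℕ} (hi : [i] ∈ T.carrier) (w : (T.subtreeAt [i] hi).V) :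
    up hi w ≠ rootV T := by
  rw [ne_eq, eq_rootV_iff]; simp [val_up]

lemma inSub_up {T : RTree} {i : ℕ} (hi : [i] ∈ T.carrier) (w : (T.subtreeAt [i] hi).V) :
    inSub T i (up hi w) := ⟨w.1, rfl⟩

lemma up_injective {T : RTree} {i : ℕ} (hi : [i] ∈ T.carrier)
    {w w' : (T.subtreeAt [i] hi).V} (h : up hi w = up hi w') : w = w' := by
  apply Subtype.ext
  have := congrArg (fun z : T.V => z.1) h
  simpa [val_up] using this

lemma down_up {T : RTree} {i : ℕ} (hi : [i] ∈ T.carrier) (w : (T.subtreeAt [i] hi).V) :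
    down hi (up hi w) = w := by
  have e : down hi (up hi w) = _ := dif_pos (inSub_up hi w); rw [e]
  apply Subtype.ext
  simp [val_up]

lemma up_down {T : RTree} {i : ℕ} (hi : [i] ∈ T.carrier) {v : T.V} (h : inSub T i v) :
    up hi (down hi v) = v := by
  have e : down hi v = _ := dif_pos h; rw [e]
  apply Subtype.ext
  obtain ⟨t, ht⟩ := h
  have hv : v.1 = i :: t := by rw [← ht]; rfl
  simp [val_up, hv]; rfl

lemma down_eq_rootV {T : RTree} {i : ℕ} (hi : [i] ∈ T.carrier) {v : T.V}
    (h : ¬ inSub T i v) : down hi v = rootV _ := by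
  exact dif_neg h

lemma length_up {T : RTree} {i : ℕ} (hi : [i] ∈ T.carrier) (w : (T.subtreeAt [i] hi).V) :
    (up hi w).1.length = w.1.length + 1 := by simp [val_up]

lemma parIter_up_le {T : RTree} {i : ℕ} (hi : [i] ∈ T.carrier)
    (w : (T.subtreeAt [i] hi).V) {p : ℕ} (hp : p ≤ w.1.length) :
    parIter T p (up hi w) = up hi (parIter (T.subtreeAt [i] hi) p w) := by
  apply Subtype.ext
  rw [val_parIter, val_up, val_up, val_parIter]
  rw [(by simp; omega : (i :: w.1).length - p = (w.1.length - p) + 1), List.take_succ_cons]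

lemma parIter_up_gt {T : RTree} {i : ℕ} (hi : [i] ∈ T.carrier)
    (w : (T.subtreeAt [i] hi).V) {p : ℕ} (hp : w.1.length < p) :
    parIter T p (up hi w) = rootV T := by
  rw [parIter_eq_rootV_iff, length_up]; omega

lemma inSub_parIter {T : RTree} {i : ℕ} {v : T.V} (h : inSub T i v) {p : ℕ}
    (hne : parIter T p v ≠ rootV T) : inSub T i (parIter T p v) := by
  obtain ⟨t, ht⟩ := h
  have hv : v.1 = i :: t := by rw [← ht]; rfl
  rw [ne_eq, parIter_eq_rootV_iff] at hne
  refine ⟨(parIter T p v).1.tail, ?_⟩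
  rw [val_parIter, hv]
  have : v.1.length - p = (v.1.length - p - 1) + 1 := by
    rw [hv] at hne ⊢; simp at hne ⊢; omega
  rw [hv] at this
  rw [this, List.take_succ_cons]
  rfl

end RTree

namespace RTree

open FirstOrder Language

/-! ### Terms of the tree language -/

/-- The constant term `R`. -/
def Rterm {α : Type*} : treeLang.Term α :=
  Term.func (l := 0) (show treeLang.Functions 0 from ()) Fin.elim0

/-- Iterated application of the parent function to a term. -/
def piTerm {α : Type*} : ℕ → treeLang.Term α → treeLang.Term α
  | 0, t => t
  | p + 1, t => Term.func (l := 1) (show treeLang.Functions 1 from ()) (fun _ => piTerm p t)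

lemma realize_Rterm {T : RTree} {α : Type*} (v : α → T.V) :
    Term.realize v (Rterm : treeLang.Term α) = rootV T := rfl

lemma realize_piTerm {T : RTree} {α : Type*} (v : α → T.V) (p : ℕ) (t : treeLang.Term α) :
    Term.realize v (piTerm p t) = parIter T p (Term.realize v t) := by
  induction p with
  | zero => rfl
  | succ p ih =>
      have h1 : Term.realize v (piTerm (p + 1) t) = parentV T (Term.realize v (piTerm p t)) := rfl
      rw [h1, ih, parIter_succ]

/-- Normal form for terms: every term evaluates to an iterated parent of a variable,
or to the root. -/
lemma term_shape {n : ℕ} (t : treeLang.Term (Empty ⊕ Fin n)) :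
    (∀ (U : RTree) (v : Empty → U.V) (h : Fin n → U.V),
        Term.realize (Sum.elim v h) t = rootV U) ∨
    ∃ (p : ℕ) (l : Fin n), ∀ (U : RTree) (v : Empty → U.V) (h : Fin n → U.V),
        Term.realize (Sum.elim v h) t = parIter U p (h l) := by
  induction t with
  | var a =>
      rcases a with e | l
      · exact e.elim
      · exact Or.inr ⟨0, l, fun U v h => rfl⟩
  | func f ts ih =>
      rename_i m
      match m, f, ts, ih with
      | 0, f, ts, ih => exact Or.inl (fun U v h => rfl)
      | 1, f, ts, ih =>
          rcases ih 0 with h0 | ⟨p, l, h0⟩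
          · left
            intro U v h
            show parentV U (Term.realize (Sum.elim v h) (ts 0)) = rootV U
            rw [h0]
            have := parIter_rootV U 1
            rwa [parIter_succ, parIter_zero] at this
          · right
            refine ⟨p + 1, l, fun U v h => ?_⟩
            show parentV U (Term.realize (Sum.elim v h) (ts 0)) = _
            rw [h0, parIter_succ]
      | (m + 2), f, ts, ih => exact (show Empty from f).elim

/-! ### Atomic comparison formulas -/

/-- `π^p(x_l) = π^q(x_{l'})` as a quantifier-free formula. -/
def Efml (n : ℕ) (p q : ℕ) (l l' : Fin n) : treeLang.BoundedFormula Empty n :=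
  BoundedFormula.equal (piTerm p (Term.var (Sum.inr l))) (piTerm q (Term.var (Sum.inr l')))

/-- `π^p(x_l) = R` as a quantifier-free formula. -/
def Rtfml (n : ℕ) (p : ℕ) (l : Fin n) : treeLang.BoundedFormula Empty n :=
  BoundedFormula.equal (piTerm p (Term.var (Sum.inr l))) Rterm

lemma realize_equal' {T : RTree} {n : ℕ} (t₁ t₂ : treeLang.Term (Empty ⊕ Fin n))
    (v : Empty → T.V) (xs : Fin n → T.V) :
    (BoundedFormula.equal t₁ t₂).Realize v xs ↔
      Term.realize (Sum.elim v xs) t₁ = Term.realize (Sum.elim v xs) t₂ :=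
  BoundedFormula.realize_bdEqual t₁ t₂

lemma realize_Efml {T : RTree} {n : ℕ} (p q : ℕ) (l l' : Fin n)
    (v : Empty → T.V) (xs : Fin n → T.V) :
    (Efml n p q l l').Realize v xs ↔ parIter T p (xs l) = parIter T q (xs l') := by
  rw [Efml, realize_equal', realize_piTerm, realize_piTerm]
  rfl

lemma realize_Rtfml {T : RTree} {n : ℕ} (p : ℕ) (l : Fin n)
    (v : Empty → T.V) (xs : Fin n → T.V) :
    (Rtfml n p l).Realize v xs ↔ parIter T p (xs l) = rootV T := by
  rw [Rtfml, realize_equal', realize_piTerm, realize_Rterm]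
  rfl

lemma qdepth_Efml (n p q : ℕ) (l l' : Fin n) : (Efml n p q l l').qdepth = 0 := rfl
lemma qdepth_Rtfml (n p : ℕ) (l : Fin n) : (Rtfml n p l).qdepth = 0 := rfl

end RTree

namespace RTree

open FirstOrder Language

/-! ### Substitution of terms for the bounded variables -/

/-- Lift a substitution under a quantifier. -/
def liftSub {m m' : ℕ} (ρ : Fin m → treeLang.Term (Empty ⊕ Fin m')) :
    Fin (m + 1) → treeLang.Term (Empty ⊕ Fin (m' + 1)) :=
  Fin.lastCases (Term.var (Sum.inr (Fin.last m')))
    (fun l => (ρ l).relabel (Sum.map id Fin.castSucc))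

/-- Substitute terms for all the bounded variables of a formula. -/
def subs : ∀ {m m' : ℕ}, treeLang.BoundedFormula Empty m →
    (Fin m → treeLang.Term (Empty ⊕ Fin m')) → treeLang.BoundedFormula Empty m'
  | _, _, BoundedFormula.falsum, _ => BoundedFormula.falsum
  | _, _, BoundedFormula.equal t₁ t₂, ρ =>
      BoundedFormula.equal (t₁.subst (Sum.elim (fun e => e.elim) ρ))
        (t₂.subst (Sum.elim (fun e => e.elim) ρ))
  | _, _, BoundedFormula.rel r _, _ => (show Empty from r).elim
  | _, _, BoundedFormula.imp f g, ρ => (subs f ρ).imp (subs g ρ)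
  | _, _, BoundedFormula.all f, ρ => (subs f (liftSub ρ)).all

lemma qdepth_subs : ∀ {m m' : ℕ} (φ : treeLang.BoundedFormula Empty m)
    (ρ : Fin m → treeLang.Term (Empty ⊕ Fin m')),
    (subs φ ρ).qdepth = φ.qdepth
  | _, _, BoundedFormula.falsum, _ => rfl
  | _, _, BoundedFormula.equal _ _, _ => rfl
  | _, _, BoundedFormula.rel r _, _ => (show Empty from r).elim
  | _, _, BoundedFormula.imp f g, ρ => by
      show max (subs f ρ).qdepth (subs g ρ).qdepth = _
      rw [qdepth_subs f ρ, qdepth_subs g ρ]; rfl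
  | _, _, BoundedFormula.all f, ρ => by
      show (subs f (liftSub ρ)).qdepth + 1 = _
      rw [qdepth_subs f (liftSub ρ)]; rfl

lemma realize_subs {T : RTree} : ∀ {m m' : ℕ} (φ : treeLang.BoundedFormula Empty m)
    (ρ : Fin m → treeLang.Term (Empty ⊕ Fin m')) (v : Empty → T.V) (xs : Fin m' → T.V),
    (subs φ ρ).Realize v xs ↔
      φ.Realize v (fun l => Term.realize (Sum.elim v xs) (ρ l))
  | _, _, BoundedFormula.falsum, ρ, v, xs => Iff.rfl
  | _, _, BoundedFormula.equal t₁ t₂, ρ, v, xs => by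
      rw [subs, realize_equal']
      show _ ↔ (BoundedFormula.equal t₁ t₂).Realize v _
      rw [realize_equal']
      rw [Term.realize_subst, Term.realize_subst]
      constructor <;> intro h <;> (
        convert h using 2 <;> (funext a; rcases a with e | l; exact e.elim; rfl))
  | _, _, BoundedFormula.rel r _, _, _, _ => (show Empty from r).elim
  | _, _, BoundedFormula.imp f g, ρ, v, xs => by
      show ((subs f ρ).imp (subs g ρ)).Realize v xs ↔ _
      rw [BoundedFormula.realize_imp, BoundedFormula.realize_imp,
        realize_subs f ρ v xs, realize_subs g ρ v xs]
  | _, _, BoundedFormula.all f, ρ, v, xs => by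
      show ((subs f (liftSub ρ)).all).Realize v xs ↔ _
      rw [BoundedFormula.realize_all, BoundedFormula.realize_all]
      apply forall_congr'
      intro a
      rw [realize_subs f (liftSub ρ) v (Fin.snoc xs a)]
      have : (fun l => Term.realize (Sum.elim v (Fin.snoc xs a)) (liftSub ρ l)) =
          Fin.snoc (fun l => Term.realize (Sum.elim v xs) (ρ l)) a := by
        funext l
        refine Fin.lastCases ?_ (fun l => ?_) l
        · simp [liftSub, Fin.lastCases_last, Fin.snoc_last]
        · have hl : liftSub ρ l.castSucc = (ρ l).relabel (Sum.map id Fin.castSucc) := by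
            simp [liftSub]
          rw [hl, Term.realize_relabel, Fin.snoc_castSucc]
          congr 1
          funext a'
          rcases a' with e | j
          · rfl
          · simp [Fin.snoc_castSucc]
      rw [this]

/-- Substitute the root for the last bounded variable. -/
def substLastRoot {n : ℕ} (θ : treeLang.BoundedFormula Empty (n + 1)) :
    treeLang.BoundedFormula Empty n :=
  subs θ (Fin.lastCases Rterm (fun l => Term.var (Sum.inr l)))

lemma realize_substLastRoot {T : RTree} {n : ℕ} (θ : treeLang.BoundedFormula Empty (n + 1))
    (v : Empty → T.V) (xs : Fin n → T.V) :
    (substLastRoot θ).Realize v xs ↔ θ.Realize v (Fin.snoc xs (rootV T)) := by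
  rw [substLastRoot, realize_subs]
  have : (fun l => Term.realize (Sum.elim v xs)
      ((Fin.lastCases Rterm (fun l => Term.var (Sum.inr l)) : Fin (n+1) → _) l)) =
      Fin.snoc xs (rootV T) := by
    funext l
    refine Fin.lastCases ?_ (fun l => ?_) l
    · simp [Fin.lastCases_last, Fin.snoc_last, realize_Rterm]
    · simp [Fin.lastCases_castSucc, Fin.snoc_castSucc]
  rw [this]

lemma qdepth_substLastRoot {n : ℕ} (θ : treeLang.BoundedFormula Empty (n + 1)) :
    (substLastRoot θ).qdepth = θ.qdepth := qdepth_subs _ _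

/-- Substitute the root for all but the last bounded variable, producing a
one-variable formula. -/
def padLast {n : ℕ} (θ : treeLang.BoundedFormula Empty (n + 1)) :
    treeLang.BoundedFormula Empty 1 :=
  subs θ (Fin.lastCases (Term.var (Sum.inr 0)) (fun _ => Rterm))

lemma realize_padLast {T : RTree} {n : ℕ} (θ : treeLang.BoundedFormula Empty (n + 1))
    (v : Empty → T.V) (xs : Fin 1 → T.V) :
    (padLast θ).Realize v xs ↔ θ.Realize v (Fin.snoc (fun _ => rootV T) (xs 0)) := by
  rw [padLast, realize_subs]
  have : (fun l => Term.realize (Sum.elim v xs)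
      ((Fin.lastCases (Term.var (Sum.inr 0)) (fun _ => Rterm) : Fin (n+1) → _) l)) =
      Fin.snoc (fun _ => rootV T) (xs 0) := by
    funext l
    refine Fin.lastCases ?_ (fun l => ?_) l
    · simp [Fin.lastCases_last, Fin.snoc_last]
    · simp [Fin.lastCases_castSucc, Fin.snoc_castSucc, realize_Rterm]
  rw [this]

lemma qdepth_padLast {n : ℕ} (θ : treeLang.BoundedFormula Empty (n + 1)) :
    (padLast θ).qdepth = θ.qdepth := qdepth_subs _ _

/-- View a sentence as a formula with `m` bounded variables. -/
def liftSentence {m : ℕ} (ξ : treeLang.Sentence) : treeLang.BoundedFormula Empty m :=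
  subs ξ Fin.elim0

lemma realize_zero_any {T : RTree} (φ : treeLang.BoundedFormula Empty 0)
    (v v' : Empty → T.V) (xs xs' : Fin 0 → T.V) :
    φ.Realize v xs ↔ φ.Realize v' xs' := by
  have h1 : v = v' := funext (fun e => e.elim)
  have h2 : xs = xs' := funext (fun l => l.elim0)
  rw [h1, h2]

lemma sentence_realize_iff {T : RTree} (ξ : treeLang.Sentence)
    (v : Empty → T.V) (xs : Fin 0 → T.V) :
    T.V ⊨ ξ ↔ BoundedFormula.Realize ξ v xs := by
  have h1 : (T.V ⊨ ξ) = Formula.Realize ξ (default : Empty → T.V) := rfl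
  have h2 : Formula.Realize ξ (default : Empty → T.V) =
      BoundedFormula.Realize ξ (default : Empty → T.V) (default : Fin 0 → T.V) := rfl
  rw [h1, h2]
  exact realize_zero_any ξ _ _ _ _

lemma realize_liftSentence {T : RTree} {m : ℕ} (ξ : treeLang.Sentence)
    (v : Empty → T.V) (xs : Fin m → T.V) :
    (liftSentence ξ : treeLang.BoundedFormula Empty m).Realize v xs ↔ T.V ⊨ ξ := by
  rw [liftSentence, realize_subs]
  exact (sentence_realize_iff ξ v (fun l => Term.realize (Sum.elim v xs) (Fin.elim0 l))).symm

lemma qdepth_liftSentence {m : ℕ} (ξ : treeLang.Sentence) :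
    (liftSentence ξ : treeLang.BoundedFormula Empty m).qdepth = ξ.qdepth := qdepth_subs _ _

end RTree

namespace RTree

open FirstOrder Language

/-! ### Finite conjunctions and patterns -/

/-- Conjunction of bounded formulas. -/
def bfand {n : ℕ} (φ ψ : treeLang.BoundedFormula Empty n) : treeLang.BoundedFormula Empty n :=
  (φ.imp ψ.not).not

lemma realize_bfand {T : RTree} {n : ℕ} (φ ψ : treeLang.BoundedFormula Empty n)
    (v : Empty → T.V) (xs : Fin n → T.V) :
    (bfand φ ψ).Realize v xs ↔ φ.Realize v xs ∧ ψ.Realize v xs := by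
  rw [bfand, BoundedFormula.realize_not, BoundedFormula.realize_imp,
    BoundedFormula.realize_not]
  tauto

lemma qdepth_bfand {n : ℕ} (φ ψ : treeLang.BoundedFormula Empty n) :
    (bfand φ ψ).qdepth = max φ.qdepth ψ.qdepth := by
  show max (max φ.qdepth (max ψ.qdepth 0)) 0 = _
  omega

lemma qdepth_not {n : ℕ} (φ : treeLang.BoundedFormula Empty n) :
    (BoundedFormula.not φ).qdepth = φ.qdepth := by
  show max φ.qdepth 0 = _
  omega

/-- The true formula. -/
def bftrue {n : ℕ} : treeLang.BoundedFormula Empty n := BoundedFormula.not BoundedFormula.falsum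

lemma realize_bftrue {T : RTree} {n : ℕ} (v : Empty → T.V) (xs : Fin n → T.V) :
    (bftrue (n := n)).Realize v xs := by
  rw [bftrue, BoundedFormula.realize_not]
  exact fun h => h

lemma qdepth_bftrue {n : ℕ} : (bftrue (n := n)).qdepth = 0 := rfl

/-- Conjunction of a list of bounded formulas. -/
def conjList {n : ℕ} : List (treeLang.BoundedFormula Empty n) → treeLang.BoundedFormula Empty n
  | [] => bftrue
  | θ :: L => bfand θ (conjList L)

lemma realize_conjList {T : RTree} {n : ℕ} (L : List (treeLang.BoundedFormula Empty n))
    (v : Empty → T.V) (xs : Fin n → T.V) :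
    (conjList L).Realize v xs ↔ ∀ θ ∈ L, θ.Realize v xs := by
  induction L with
  | nil => simpa [conjList] using realize_bftrue v xs
  | cons θ L ih =>
      rw [conjList, realize_bfand, ih]
      simp

lemma qdepth_conjList_le {n : ℕ} (L : List (treeLang.BoundedFormula Empty n)) (b : ℕ)
    (h : ∀ θ ∈ L, θ.qdepth ≤ b) : (conjList L).qdepth ≤ b := by
  induction L with
  | nil => simp [conjList, qdepth_bftrue]
  | cons θ L ih =>
      rw [conjList, qdepth_bfand]
      exact max_le (h θ (by simp)) (ih (fun θ' h' => h θ' (by simp [h'])))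

/-- The conjunction asserting exactly which members of `Θ` hold (those in `P`). -/
noncomputable def pattern {n : ℕ} (Θ P : List (treeLang.BoundedFormula Empty n)) :
    treeLang.BoundedFormula Empty n :=
  conjList (Θ.map (fun θ => if θ ∈ P then θ else θ.not))

lemma qdepth_pattern_le {n : ℕ} (Θ P : List (treeLang.BoundedFormula Empty n)) (b : ℕ)
    (h : ∀ θ ∈ Θ, θ.qdepth ≤ b) : (pattern Θ P).qdepth ≤ b := by
  apply qdepth_conjList_le
  intro θ' h'
  rw [List.mem_map] at h'
  obtain ⟨θ, hθ, rfl⟩ := h'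
  split
  · exact h θ hθ
  · rw [qdepth_not]; exact h θ hθ

lemma realize_pattern_iff {T : RTree} {n : ℕ} (Θ P : List (treeLang.BoundedFormula Empty n))
    (v : Empty → T.V) (xs : Fin n → T.V) :
    (pattern Θ P).Realize v xs ↔ ∀ θ ∈ Θ, (θ.Realize v xs ↔ θ ∈ P) := by
  rw [pattern, realize_conjList]
  constructor
  · intro h θ hθ
    by_cases hp : θ ∈ P
    · have := h θ (by rw [List.mem_map]; exact ⟨θ, hθ, by simp [hp]⟩)
      tauto
    · have := h (θ.not) (by rw [List.mem_map]; exact ⟨θ, hθ, by simp [hp]⟩)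
      rw [BoundedFormula.realize_not] at this
      tauto
  · intro h θ' h'
    rw [List.mem_map] at h'
    obtain ⟨θ, hθ, rfl⟩ := h'
    by_cases hp : θ ∈ P <;> simp only [hp, if_true, if_false, reduceIte]
    · exact (h θ hθ).mpr hp
    · rw [BoundedFormula.realize_not]
      intro hr
      exact hp ((h θ hθ).mp hr)

/-- The semantic pattern of a tuple: the sublist of `Θ` of formulas it satisfies. -/
noncomputable def truePattern {T : RTree} {n : ℕ} (Θ : List (treeLang.BoundedFormula Empty n))
    (v : Empty → T.V) (xs : Fin n → T.V) : List (treeLang.BoundedFormula Empty n) :=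
  Θ.filter (fun θ => decide (θ.Realize v xs))

lemma truePattern_mem_sublists {T : RTree} {n : ℕ} (Θ : List (treeLang.BoundedFormula Empty n))
    (v : Empty → T.V) (xs : Fin n → T.V) : truePattern Θ v xs ∈ Θ.sublists := by
  rw [List.mem_sublists]; exact List.filter_sublist

lemma realize_truePattern {T : RTree} {n : ℕ} (Θ : List (treeLang.BoundedFormula Empty n))
    (v : Empty → T.V) (xs : Fin n → T.V) :
    (pattern Θ (truePattern Θ v xs)).Realize v xs := by
  rw [realize_pattern_iff]
  intro θ hθ
  rw [truePattern, List.mem_filter]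
  constructor
  · intro h; exact ⟨hθ, by simp [h]⟩
  · rintro ⟨-, h⟩; simpa using h

end RTree

namespace RTree

open FirstOrder Language

/-! ### The simulation relation -/

/-- The set of indices of fresh (unmatched) rootchildren whose subtree satisfies `ξ`. -/
def freshSet (T : RTree) (ms : List ℕ) (ξ : treeLang.Sentence) : Set ℕ :=
  {i | ∃ hi : [i] ∈ T.carrier, i ∉ ms ∧ (T.subtreeAt [i] hi).V ⊨ ξ}

/-- The conditions making `M` a matching witnessing the simulation of `(T, f)` by
`(T', g)` relative to the local formulas `Θ` and the counting sentences `Ξ`. -/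
structure SimData {n : ℕ} (Θ : List (treeLang.BoundedFormula Empty n))
    (Ξ : List (treeLang.Sentence × ℕ)) (T T' : RTree)
    (f : Fin n → T.V) (g : Fin n → T'.V) (M : List (ℕ × ℕ)) : Prop where
  hchild : ∀ p ∈ M, [p.1] ∈ T.carrier ∧ [p.2] ∈ T'.carrier
  hinj1 : ∀ p ∈ M, ∀ q ∈ M, p.1 = q.1 → p = q
  hinj2 : ∀ p ∈ M, ∀ q ∈ M, p.2 = q.2 → p = q
  hroot : ∀ l, f l = rootV T ↔ g l = rootV T'
  hmem : ∀ p ∈ M, ∀ l, inSub T p.1 (f l) ↔ inSub T' p.2 (g l)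
  hcov : ∀ l, f l ≠ rootV T → ∃ p ∈ M, inSub T p.1 (f l)
  hcov' : ∀ l, g l ≠ rootV T' → ∃ p ∈ M, inSub T' p.2 (g l)
  hθ : ∀ p ∈ M, ∀ (h1 : [p.1] ∈ T.carrier) (h2 : [p.2] ∈ T'.carrier), ∀ θ ∈ Θ,
    (θ.Realize (fun e => e.elim) (fun l => down h1 (f l)) ↔
      θ.Realize (fun e => e.elim) (fun l => down h2 (g l)))
  hcnt : ∀ q ∈ Ξ, ((q.2 : ℕ∞) ≤ (freshSet T (M.map Prod.fst) q.1).encard ↔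
    (q.2 : ℕ∞) ≤ (freshSet T' (M.map Prod.snd) q.1).encard)

/-- The simulation relation. -/
def Sim {n : ℕ} (Θ : List (treeLang.BoundedFormula Empty n))
    (Ξ : List (treeLang.Sentence × ℕ)) (T T' : RTree)
    (f : Fin n → T.V) (g : Fin n → T'.V) : Prop :=
  ∃ M, SimData Θ Ξ T T' f g M

lemma Sim.mono {n : ℕ} {Θ Θ' : List (treeLang.BoundedFormula Empty n)}
    {Ξ Ξ' : List (treeLang.Sentence × ℕ)} {T T' : RTree}
    {f : Fin n → T.V} {g : Fin n → T'.V} (h : Sim Θ Ξ T T' f g)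
    (hΘ : ∀ θ ∈ Θ', θ ∈ Θ) (hΞ : ∀ q ∈ Ξ', q ∈ Ξ) : Sim Θ' Ξ' T T' f g := by
  obtain ⟨M, hM⟩ := h
  exact ⟨M, SimData.mk hM.hchild hM.hinj1 hM.hinj2 hM.hroot hM.hmem hM.hcov hM.hcov'
    (fun p hp h1 h2 θ hθ => hM.hθ p hp h1 h2 θ (hΘ θ hθ))
    (fun q hq => hM.hcnt q (hΞ q hq))⟩

lemma Sim.symm {n : ℕ} {Θ : List (treeLang.BoundedFormula Empty n)}
    {Ξ : List (treeLang.Sentence × ℕ)} {T T' : RTree}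
    {f : Fin n → T.V} {g : Fin n → T'.V} (h : Sim Θ Ξ T T' f g) : Sim Θ Ξ T' T g f := by
  obtain ⟨M, hM⟩ := h
  refine ⟨M.map Prod.swap, ?_⟩
  have hmem' : ∀ p, p ∈ M.map Prod.swap ↔ Prod.swap p ∈ M := by
    intro p
    rw [List.mem_map]
    constructor
    · rintro ⟨q, hq, rfl⟩; simpa using hq
    · intro hp; exact ⟨p.swap, hp, by simp⟩
  have hfst : (M.map Prod.swap).map Prod.fst = M.map Prod.snd := by
    rw [List.map_map]; rfl
  have hsnd : (M.map Prod.swap).map Prod.snd = M.map Prod.fst := by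
    rw [List.map_map]; rfl
  refine SimData.mk ?_ ?_ ?_ (fun l => (hM.hroot l).symm) ?_ ?_ ?_ ?_ ?_
  · intro p hp
    rw [hmem'] at hp
    exact ⟨(hM.hchild _ hp).2, (hM.hchild _ hp).1⟩
  · intro p hp q hq he
    rw [hmem'] at hp hq
    have := hM.hinj2 _ hp _ hq (by simpa using he)
    have : p.swap.swap = q.swap.swap := by rw [this]
    simpa using this
  · intro p hp q hq he
    rw [hmem'] at hp hq
    have := hM.hinj1 _ hp _ hq (by simpa using he)
    have : p.swap.swap = q.swap.swap := by rw [this]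
    simpa using this
  · intro p hp l
    rw [hmem'] at hp
    exact (hM.hmem _ hp l).symm
  · intro l hl
    obtain ⟨p, hp, h⟩ := hM.hcov' l hl
    exact ⟨p.swap, (hmem' _).mpr (by simpa using hp), h⟩
  · intro l hl
    obtain ⟨p, hp, h⟩ := hM.hcov l hl
    exact ⟨p.swap, (hmem' _).mpr (by simpa using hp), h⟩
  · intro p hp h1 h2 θ hθ
    rw [hmem'] at hp
    exact (hM.hθ _ hp h2 h1 θ hθ).symm
  · intro q hq
    rw [hfst, hsnd]
    exact (hM.hcnt q hq).symm

/-- Counting helper: removing a common member shifts the threshold by one. -/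
lemma encard_diff_iff {A : Set ℕ} {a : ℕ} (ha : a ∈ A) (t : ℕ) :
    ((t : ℕ∞) ≤ (A \ {a}).encard) ↔ ((t : ℕ∞) + 1 ≤ A.encard) := by
  rw [← Set.encard_diff_singleton_add_one ha]
  exact (ENat.add_le_add_iff_right (by simp)).symm

end RTree

namespace RTree

open FirstOrder Language

/-! ### The extension step -/

lemma qdepth_ex {n : ℕ} (φ : treeLang.BoundedFormula Empty (n + 1)) :
    (BoundedFormula.ex φ).qdepth = φ.qdepth + 1 := by
  show max ((max φ.qdepth 0) + 1) 0 = _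
  omega

lemma down_snoc {T : RTree} {i : ℕ} (h1 : [i] ∈ T.carrier) {n : ℕ} (f : Fin n → T.V)
    (x : T.V) :
    (fun l : Fin (n + 1) => down h1 (Fin.snoc (α := fun _ => T.V) f x l)) =
      Fin.snoc (fun l => down h1 (f l)) (down h1 x) := by
  funext l
  refine Fin.lastCases ?_ (fun l => ?_) l
  · rw [Fin.snoc_last, Fin.snoc_last]
  · rw [Fin.snoc_castSucc, Fin.snoc_castSucc]

/-- Local formulas needed one quantifier up. -/
noncomputable def extTh {n : ℕ} (Θ : List (treeLang.BoundedFormula Empty (n + 1))) :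
    List (treeLang.BoundedFormula Empty n) :=
  Θ.map substLastRoot ++ Θ.sublists.map (fun P => BoundedFormula.ex (pattern Θ P))

/-- Counting sentences needed one quantifier up. -/
noncomputable def extXi {n : ℕ} (Θ : List (treeLang.BoundedFormula Empty (n + 1)))
    (Ξ : List (treeLang.Sentence × ℕ)) : List (treeLang.Sentence × ℕ) :=
  Ξ ++ Ξ.map (fun q => (q.1, q.2 + 1)) ++
    Θ.sublists.map (fun P => (BoundedFormula.ex (padLast (pattern Θ P)), 1))

lemma mem_extXi_left {n : ℕ} {Θ : List (treeLang.BoundedFormula Empty (n + 1))}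
    {Ξ : List (treeLang.Sentence × ℕ)} {q} (hq : q ∈ Ξ) : q ∈ extXi Θ Ξ := by
  rw [extXi]
  exact List.mem_append_left _ (List.mem_append_left _ hq)

lemma mem_extXi_mid {n : ℕ} {Θ : List (treeLang.BoundedFormula Empty (n + 1))}
    {Ξ : List (treeLang.Sentence × ℕ)} {q} (hq : q ∈ Ξ) :
    (q.1, q.2 + 1) ∈ extXi Θ Ξ := by
  rw [extXi]
  exact List.mem_append_left _
    (List.mem_append_right _ (List.mem_map.mpr ⟨q, hq, rfl⟩))

/-- The extension lemma: a simulation for the extended lists can be extended by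
any vertex on either side. -/
lemma sim_extend {n : ℕ} (Θ : List (treeLang.BoundedFormula Empty (n + 1)))
    (Ξ : List (treeLang.Sentence × ℕ))
    (hlift : ∀ q ∈ Ξ, (liftSentence q.1 : treeLang.BoundedFormula Empty (n + 1)) ∈ Θ)
    {T T' : RTree} {f : Fin n → T.V} {g : Fin n → T'.V}
    (hs : Sim (extTh Θ) (extXi Θ Ξ) T T' f g) (x : T.V) :
    ∃ y : T'.V, Sim Θ Ξ T T' (Fin.snoc f x) (Fin.snoc g y) := by
  classical
  obtain ⟨M, hM⟩ := hs
  by_cases hx : x = rootV T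
  · -- x is the root
    refine ⟨rootV T', M, hM.hchild, hM.hinj1, hM.hinj2, ?_, ?_, ?_, ?_, ?_, ?_⟩
    · intro l
      refine Fin.lastCases ?_ (fun l => ?_) l
      · rw [Fin.snoc_last, Fin.snoc_last, hx]
        simp
      · rw [Fin.snoc_castSucc, Fin.snoc_castSucc]
        exact hM.hroot l
    · intro p hp l
      refine Fin.lastCases ?_ (fun l => ?_) l
      · rw [Fin.snoc_last, Fin.snoc_last, hx]
        exact iff_of_false (not_inSub_rootV _ _) (not_inSub_rootV _ _)
      · rw [Fin.snoc_castSucc, Fin.snoc_castSucc]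
        exact hM.hmem p hp l
    · intro l
      refine Fin.lastCases ?_ (fun l => ?_) l
      · rw [Fin.snoc_last, hx]
        intro hc; exact absurd rfl hc
      · rw [Fin.snoc_castSucc]
        exact hM.hcov l
    · intro l
      refine Fin.lastCases ?_ (fun l => ?_) l
      · rw [Fin.snoc_last]
        intro hc; exact absurd rfl hc
      · rw [Fin.snoc_castSucc]
        exact hM.hcov' l
    · intro p hp h1 h2 θ hθ
      rw [down_snoc, down_snoc]
      have dx : down h1 (Fin.snoc (α := fun _ => T.V) f x (Fin.last n)) = rootV _ := by
        rw [Fin.snoc_last, hx]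
        exact down_eq_rootV h1 (not_inSub_rootV _ _)
      rw [Fin.snoc_last] at dx
      have dy : down h2 (rootV T') = rootV _ := down_eq_rootV h2 (not_inSub_rootV _ _)
      rw [dx, dy, ← realize_substLastRoot, ← realize_substLastRoot]
      exact hM.hθ p hp h1 h2 _
        (by rw [extTh]; exact List.mem_append_left _ (List.mem_map.mpr ⟨θ, hθ, rfl⟩))
    · intro q hq
      exact hM.hcnt q (mem_extXi_left hq)
  · -- x is not the root
    obtain ⟨i₀, hc, hins⟩ := exists_child_of_ne_rootV hx
    by_cases hnm : ∃ p ∈ M, p.1 = i₀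
    · -- x lies in an already matched subtree
      obtain ⟨p₀, hp₀M, hp₀⟩ := hnm
      subst hp₀
      obtain ⟨h1, h2⟩ := hM.hchild p₀ hp₀M
      set u := down h1 x with hu
      set fL := fun l => down h1 (f l) with hfL
      set gL := fun l => down h2 (g l) with hgL
      set P := truePattern Θ (fun e => e.elim) (Fin.snoc fL u) with hP
      have hpat : (pattern Θ P).Realize (fun e => e.elim) (Fin.snoc fL u) :=
        realize_truePattern _ _ _
      have hexP : (BoundedFormula.ex (pattern Θ P)).Realize (fun e => e.elim) fL :=
        BoundedFormula.realize_ex.mpr ⟨u, hpat⟩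
      have hmemP : BoundedFormula.ex (pattern Θ P) ∈ extTh Θ := by
        rw [extTh]
        exact List.mem_append_right _
          (List.mem_map.mpr ⟨P, truePattern_mem_sublists _ _ _, rfl⟩)
      have hexP' := (hM.hθ p₀ hp₀M h1 h2 _ hmemP).mp hexP
      obtain ⟨w, hw⟩ := BoundedFormula.realize_ex.mp hexP'
      have hwpat := (realize_pattern_iff Θ P _ _).mp hw
      have hupat := (realize_pattern_iff Θ P _ _).mp hpat
      refine ⟨up h2 w, M, hM.hchild, hM.hinj1, hM.hinj2, ?_, ?_, ?_, ?_, ?_, ?_⟩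
      · intro l
        refine Fin.lastCases ?_ (fun l => ?_) l
        · rw [Fin.snoc_last, Fin.snoc_last]
          exact iff_of_false hx (up_ne_rootV h2 w)
        · rw [Fin.snoc_castSucc, Fin.snoc_castSucc]
          exact hM.hroot l
      · intro p hp l
        refine Fin.lastCases ?_ (fun l => ?_) l
        · rw [Fin.snoc_last, Fin.snoc_last]
          constructor
          · intro h
            have : p = p₀ := hM.hinj1 p hp p₀ hp₀M (inSub_unique h hins)
            rw [this]
            exact inSub_up h2 w
          · intro h
            have : p = p₀ := hM.hinj2 p hp p₀ hp₀M (inSub_unique h (inSub_up h2 w))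
            rw [this]
            exact hins
        · rw [Fin.snoc_castSucc, Fin.snoc_castSucc]
          exact hM.hmem p hp l
      · intro l
        refine Fin.lastCases ?_ (fun l => ?_) l
        · rw [Fin.snoc_last]
          exact fun _ => ⟨p₀, hp₀M, hins⟩
        · rw [Fin.snoc_castSucc]
          exact hM.hcov l
      · intro l
        refine Fin.lastCases ?_ (fun l => ?_) l
        · rw [Fin.snoc_last]
          exact fun _ => ⟨p₀, hp₀M, inSub_up h2 w⟩
        · rw [Fin.snoc_castSucc]
          exact hM.hcov' l
      · intro p hp h1' h2' θ hθ
        rw [down_snoc, down_snoc]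
        by_cases hpp : p = p₀
        · subst hpp
          have e1 : down h1' (x : T.V) = u := rfl
          have e2 : down h2' (up h2 w) = w := down_up h2 w
          have e3 : (fun l => down h1' (f l)) = fL := rfl
          have e4 : (fun l => down h2' (g l)) = gL := rfl
          rw [e1, e2, e3, e4]
          rw [hupat θ hθ, hwpat θ hθ]
        · have hx1 : ¬ inSub T p.1 x := by
            intro h
            exact hpp (hM.hinj1 p hp p₀ hp₀M (inSub_unique h hins))
          have hy1 : ¬ inSub T' p.2 (up h2 w) := by
            intro h
            exact hpp (hM.hinj2 p hp p₀ hp₀M (inSub_unique h (inSub_up h2 w)))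
          rw [down_eq_rootV h1' hx1, down_eq_rootV h2' hy1,
            ← realize_substLastRoot, ← realize_substLastRoot]
          exact hM.hθ p hp h1' h2' _
            (by rw [extTh]; exact List.mem_append_left _ (List.mem_map.mpr ⟨θ, hθ, rfl⟩))
      · intro q hq
        exact hM.hcnt q (mem_extXi_left hq)
    · -- x lies in a fresh subtree
      push_neg at hnm
      set u := down hc x with hu
      have hfl : ∀ l, ¬ inSub T i₀ (f l) := by
        intro l hin
        obtain ⟨p, hpM, hpin⟩ := hM.hcov l (ne_rootV_of_inSub hin)
        exact hnm p hpM (inSub_unique hpin hin)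
      have hfLc : (fun l => down hc (f l)) = (fun _ => rootV (T.subtreeAt [i₀] hc)) := by
        funext l
        exact down_eq_rootV hc (hfl l)
      set P := truePattern Θ (fun e => e.elim)
        (Fin.snoc (fun _ => rootV (T.subtreeAt [i₀] hc)) u) with hP
      have hpat : (pattern Θ P).Realize (fun e => e.elim)
          (Fin.snoc (fun _ => rootV (T.subtreeAt [i₀] hc)) u) := realize_truePattern _ _ _
      set σ := BoundedFormula.ex (padLast (pattern Θ P)) with hσ
      have hsatσ : (T.subtreeAt [i₀] hc).V ⊨ σ := by
        rw [sentence_realize_iff σ (fun e => e.elim) (fun l => l.elim0)]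
        rw [hσ]
        refine BoundedFormula.realize_ex.mpr ⟨u, ?_⟩
        rw [realize_padLast]
        have h0 : (Fin.snoc (fun l : Fin 0 => l.elim0) u : Fin 1 → _) 0 = u :=
          Fin.snoc_last _ _
        rw [h0]
        exact hpat
      have hσmem : (σ, 1) ∈ extXi Θ Ξ := by
        rw [extXi]
        exact List.mem_append_right _
          (List.mem_map.mpr ⟨P, truePattern_mem_sublists _ _ _, rfl⟩)
      have hi₀fresh : i₀ ∉ M.map Prod.fst := by
        intro hmm
        obtain ⟨p, hpM, hpe⟩ := List.mem_map.mp hmm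
        exact hnm p hpM hpe
      have hone : ((1 : ℕ) : ℕ∞) ≤ (freshSet T (M.map Prod.fst) σ).encard := by
        rw [Nat.cast_one, Set.one_le_encard_iff_nonempty]
        exact ⟨i₀, hc, hi₀fresh, hsatσ⟩
      have hone' := (hM.hcnt (σ, 1) hσmem).mp hone
      rw [Nat.cast_one, Set.one_le_encard_iff_nonempty] at hone'
      obtain ⟨i', h2, hi'fresh, hσ'⟩ := hone'
      rw [sentence_realize_iff σ (fun e => e.elim) (fun l => l.elim0), hσ] at hσ'
      obtain ⟨w, hw0⟩ := BoundedFormula.realize_ex.mp hσ'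
      rw [realize_padLast] at hw0
      have h0' : (Fin.snoc (fun l : Fin 0 => l.elim0) w : Fin 1 → _) 0 = w :=
        Fin.snoc_last _ _
      rw [h0'] at hw0
      have hwpat := (realize_pattern_iff Θ P _ _).mp hw0
      have hupat := (realize_pattern_iff Θ P _ _).mp hpat
      have hgl : ∀ l, ¬ inSub T' i' (g l) := by
        intro l hin
        obtain ⟨p, hpM, hpin⟩ := hM.hcov' l (ne_rootV_of_inSub hin)
        exact hi'fresh (List.mem_map.mpr ⟨p, hpM, inSub_unique hpin hin⟩)
      refine ⟨up h2 w, (i₀, i') :: M, ?_, ?_, ?_, ?_, ?_, ?_, ?_, ?_, ?_⟩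
      · intro p hp
        rcases List.mem_cons.mp hp with rfl | hp
        · exact ⟨hc, h2⟩
        · exact hM.hchild p hp
      · intro p hp q hq he
        rcases List.mem_cons.mp hp with rfl | hp <;> rcases List.mem_cons.mp hq with rfl | hq
        · rfl
        · exact absurd he.symm (hnm q hq)
        · exact absurd he (hnm p hp)
        · exact hM.hinj1 p hp q hq he
      · intro p hp q hq he
        rcases List.mem_cons.mp hp with rfl | hp <;> rcases List.mem_cons.mp hq with rfl | hq
        · rfl
        · exact absurd (List.mem_map.mpr ⟨q, hq, he.symm⟩) hi'fresh
        · exact absurd (List.mem_map.mpr ⟨p, hp, he⟩) hi'fresh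
        · exact hM.hinj2 p hp q hq he
      · intro l
        refine Fin.lastCases ?_ (fun l => ?_) l
        · rw [Fin.snoc_last, Fin.snoc_last]
          exact iff_of_false hx (up_ne_rootV h2 w)
        · rw [Fin.snoc_castSucc, Fin.snoc_castSucc]
          exact hM.hroot l
      · intro p hp l
        rcases List.mem_cons.mp hp with rfl | hp
        · refine Fin.lastCases ?_ (fun l => ?_) l
          · rw [Fin.snoc_last, Fin.snoc_last]
            exact iff_of_true hins (inSub_up h2 w)
          · rw [Fin.snoc_castSucc, Fin.snoc_castSucc]
            exact iff_of_false (hfl l) (hgl l)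
        · refine Fin.lastCases ?_ (fun l => ?_) l
          · rw [Fin.snoc_last, Fin.snoc_last]
            refine iff_of_false ?_ ?_
            · intro h; exact hnm p hp (inSub_unique h hins)
            · intro h
              exact hi'fresh (List.mem_map.mpr ⟨p, hp, inSub_unique h (inSub_up h2 w)⟩)
          · rw [Fin.snoc_castSucc, Fin.snoc_castSucc]
            exact hM.hmem p hp l
      · intro l
        refine Fin.lastCases ?_ (fun l => ?_) l
        · rw [Fin.snoc_last]
          exact fun _ => ⟨(i₀, i'), List.mem_cons_self, hins⟩
        · rw [Fin.snoc_castSucc]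
          intro hl
          obtain ⟨p, hpM, hpin⟩ := hM.hcov l hl
          exact ⟨p, List.mem_cons_of_mem _ hpM, hpin⟩
      · intro l
        refine Fin.lastCases ?_ (fun l => ?_) l
        · rw [Fin.snoc_last]
          exact fun _ => ⟨(i₀, i'), List.mem_cons_self, inSub_up h2 w⟩
        · rw [Fin.snoc_castSucc]
          intro hl
          obtain ⟨p, hpM, hpin⟩ := hM.hcov' l hl
          exact ⟨p, List.mem_cons_of_mem _ hpM, hpin⟩
      · intro p hp h1' h2' θ hθ
        rw [down_snoc, down_snoc]
        rcases List.mem_cons.mp hp with rfl | hp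
        · have e1 : down h1' (x : T.V) = u := rfl
          have e2 : down h2' (up h2 w) = w := down_up h2 w
          have e3 : (fun l => down h1' (f l)) =
              (fun _ => rootV (T.subtreeAt [i₀] hc)) := hfLc
          have e4 : (fun l => down h2' (g l)) =
              (fun _ => rootV (T'.subtreeAt [i'] h2)) := by
            funext l
            exact down_eq_rootV h2' (hgl l)
          rw [e1, e2, e3, e4]
          rw [hupat θ hθ, hwpat θ hθ]
        · have hx1 : ¬ inSub T p.1 x := by
            intro h
            exact hnm p hp (inSub_unique h hins)
          have hy1 : ¬ inSub T' p.2 (up h2 w) := by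
            intro h
            exact hi'fresh (List.mem_map.mpr ⟨p, hp, inSub_unique h (inSub_up h2 w)⟩)
          rw [down_eq_rootV h1' hx1, down_eq_rootV h2' hy1,
            ← realize_substLastRoot, ← realize_substLastRoot]
          exact hM.hθ p hp h1' h2' _
            (by rw [extTh]; exact List.mem_append_left _ (List.mem_map.mpr ⟨θ, hθ, rfl⟩))
      · intro q hq
        have hsets : freshSet T (((i₀, i') :: M).map Prod.fst) q.1 =
            freshSet T (M.map Prod.fst) q.1 \ {i₀} := by
          ext i
          simp only [freshSet, List.map_cons, List.mem_cons, Set.mem_setOf_eq,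
            Set.mem_diff, Set.mem_singleton_iff]
          constructor
          · rintro ⟨hi, hns, hsat⟩
            exact ⟨⟨hi, fun h => hns (Or.inr h), hsat⟩, fun h => hns (Or.inl h)⟩
          · rintro ⟨⟨hi, hns, hsat⟩, hne⟩
            exact ⟨hi, fun h => h.elim hne hns, hsat⟩
        have hsets' : freshSet T' (((i₀, i') :: M).map Prod.snd) q.1 =
            freshSet T' (M.map Prod.snd) q.1 \ {i'} := by
          ext i
          simp only [freshSet, List.map_cons, List.mem_cons, Set.mem_setOf_eq,
            Set.mem_diff, Set.mem_singleton_iff]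
          constructor
          · rintro ⟨hi, hns, hsat⟩
            exact ⟨⟨hi, fun h => hns (Or.inr h), hsat⟩, fun h => hns (Or.inl h)⟩
          · rintro ⟨⟨hi, hns, hsat⟩, hne⟩
            exact ⟨hi, fun h => h.elim hne hns, hsat⟩
        have hkey : ((T.subtreeAt [i₀] hc).V ⊨ q.1) ↔ ((T'.subtreeAt [i'] h2).V ⊨ q.1) := by
          have hl := hlift q hq
          have e1 := hupat _ hl
          have e2 := hwpat _ hl
          rw [realize_liftSentence] at e1 e2
          rw [e1, e2]
        rw [hsets, hsets']
        by_cases hsat : (T.subtreeAt [i₀] hc).V ⊨ q.1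
        · have hmemT : i₀ ∈ freshSet T (M.map Prod.fst) q.1 := ⟨hc, hi₀fresh, hsat⟩
          have hmemT' : i' ∈ freshSet T' (M.map Prod.snd) q.1 := by
            refine ⟨h2, ?_, hkey.mp hsat⟩
            intro hmm
            exact hi'fresh hmm
          rw [encard_diff_iff hmemT, encard_diff_iff hmemT']
          have := hM.hcnt (q.1, q.2 + 1) (mem_extXi_mid hq)
          simpa [Nat.cast_add, Nat.cast_one] using this
        · have hmemT : i₀ ∉ freshSet T (M.map Prod.fst) q.1 := by
            rintro ⟨hi, -, hsat'⟩
            exact hsat hsat'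
          have hmemT' : i' ∉ freshSet T' (M.map Prod.snd) q.1 := by
            rintro ⟨hi, -, hsat'⟩
            exact hsat (hkey.mpr hsat')
          rw [Set.diff_singleton_eq_self hmemT, Set.diff_singleton_eq_self hmemT']
          exact hM.hcnt q (mem_extXi_left hq)

end RTree

namespace RTree

open FirstOrder Language

/-! ### Transfer of atomic formulas -/

lemma root_eq_transfer {n : ℕ} {Θ : List (treeLang.BoundedFormula Empty n)}
    {Ξ : List (treeLang.Sentence × ℕ)} {T T' : RTree} {f : Fin n → T.V} {g : Fin n → T'.V}
    {M : List (ℕ × ℕ)} (hM : SimData Θ Ξ T T' f g M) (p : ℕ) (l : Fin n)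
    (hmem : ∀ a : ℕ, a + 1 = p → Rtfml n a l ∈ Θ) :
    (parIter T p (f l) = rootV T ↔ parIter T' p (g l) = rootV T') := by
  by_cases hr : f l = rootV T
  · have hr' : g l = rootV T' := (hM.hroot l).mp hr
    rw [hr, hr', parIter_rootV, parIter_rootV]
    exact iff_of_true rfl rfl
  · have hr' : g l ≠ rootV T' := fun h => hr ((hM.hroot l).mpr h)
    match p with
    | 0 =>
        rw [parIter_zero, parIter_zero]
        exact iff_of_false hr hr'
    | a + 1 =>
        obtain ⟨q, hqM, hqin⟩ := hM.hcov l hr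
        obtain ⟨h1, h2⟩ := hM.hchild q hqM
        have hqin' : inSub T' q.2 (g l) := (hM.hmem q hqM l).mp hqin
        have e1 : f l = up h1 (down h1 (f l)) := (up_down h1 hqin).symm
        have e2 : g l = up h2 (down h2 (g l)) := (up_down h2 hqin').symm
        have key : ∀ (U : RTree) (i : ℕ) (hU : [i] ∈ U.carrier) (z : U.V)
            (hz : inSub U i z),
            (parIter U (a + 1) z = rootV U ↔
              parIter (U.subtreeAt [i] hU) a (down hU z) = rootV (U.subtreeAt [i] hU)) := by
          intro U i hU z hz
          rw [parIter_eq_rootV_iff, parIter_eq_rootV_iff]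
          have ez : z.1.length = (down hU z).1.length + 1 := by
            conv_lhs => rw [← up_down hU hz]
            rw [length_up]
          omega
        rw [key T q.1 h1 (f l) hqin, key T' q.2 h2 (g l) hqin']
        rw [← realize_Rtfml (T := T.subtreeAt [q.1] h1) a l (fun e => e.elim)
          (fun l' => down h1 (f l')),
          ← realize_Rtfml (T := T'.subtreeAt [q.2] h2) a l (fun e => e.elim)
          (fun l' => down h2 (g l'))]
        exact hM.hθ q hqM h1 h2 _ (hmem a rfl)

lemma atomic_transfer {n : ℕ} (t₁ t₂ : treeLang.Term (Empty ⊕ Fin n)) :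
    ∃ Θ : List (treeLang.BoundedFormula Empty n),
      (∀ θ ∈ Θ, θ.qdepth = 0) ∧
      ∀ (T T' : RTree) (f : Fin n → T.V) (g : Fin n → T'.V),
        Sim Θ [] T T' f g →
        ((BoundedFormula.equal t₁ t₂).Realize (fun e => e.elim) f ↔
          (BoundedFormula.equal t₁ t₂).Realize (fun e => e.elim) g) := by
  classical
  rcases term_shape t₁ with sh1 | ⟨p, l, sh1⟩ <;> rcases term_shape t₂ with sh2 | ⟨q, l', sh2⟩
  · -- both root
    refine ⟨[], by simp, fun T T' f g _ => ?_⟩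
    rw [realize_equal', realize_equal', sh1, sh2, sh1, sh2]
    exact iff_of_true rfl rfl
  · -- root, var
    refine ⟨[Rtfml n (q - 1) l'], by simp [qdepth_Rtfml], fun T T' f g hs => ?_⟩
    obtain ⟨M, hM⟩ := hs
    rw [realize_equal', realize_equal', sh1, sh2, sh1, sh2]
    rw [eq_comm (a := rootV T), eq_comm (a := rootV T')]
    exact root_eq_transfer hM q l' (fun a ha => by
      simp only [List.mem_singleton]
      congr
      omega)
  · -- var, root
    refine ⟨[Rtfml n (p - 1) l], by simp [qdepth_Rtfml], fun T T' f g hs => ?_⟩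
    obtain ⟨M, hM⟩ := hs
    rw [realize_equal', realize_equal', sh1, sh2, sh1, sh2]
    exact root_eq_transfer hM p l (fun a ha => by
      simp only [List.mem_singleton]
      congr
      omega)
  · -- var, var
    refine ⟨[Efml n p q l l', Rtfml n (p - 1) l, Rtfml n (q - 1) l'],
      by simp [qdepth_Rtfml, qdepth_Efml], fun T T' f g hs => ?_⟩
    obtain ⟨M, hM⟩ := hs
    have hmem1 : ∀ a : ℕ, a + 1 = p →
        Rtfml n a l ∈ [Efml n p q l l', Rtfml n (p - 1) l, Rtfml n (q - 1) l'] := by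
      intro a ha
      have : a = p - 1 := by omega
      subst this
      simp
    have hmem2 : ∀ a : ℕ, a + 1 = q →
        Rtfml n a l' ∈ [Efml n p q l l', Rtfml n (p - 1) l, Rtfml n (q - 1) l'] := by
      intro a ha
      have : a = q - 1 := by omega
      subst this
      simp
    have tb1 := root_eq_transfer hM p l hmem1
    have tb2 := root_eq_transfer hM q l' hmem2
    rw [realize_equal', realize_equal', sh1, sh2, sh1, sh2]
    by_cases hb1 : parIter T p (f l) = rootV T <;>
      by_cases hb2 : parIter T q (f l') = rootV T
    · rw [hb1, hb2, tb1.mp hb1, tb2.mp hb2]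
      exact iff_of_true rfl rfl
    · refine iff_of_false (fun h => hb2 (by rw [← h, hb1])) ?_
      intro h
      exact (fun h2 => hb2 (tb2.mpr h2)) (by rw [← h, tb1.mp hb1])
    · refine iff_of_false (fun h => hb1 (by rw [h, hb2])) ?_
      intro h
      exact (fun h1 => hb1 (tb1.mpr h1)) (by rw [h, tb2.mp hb2])
    · -- both values nonroot
      have hfr : f l ≠ rootV T := by
        intro h; exact hb1 (by rw [h, parIter_rootV])
      have hfr' : f l' ≠ rootV T := by
        intro h; exact hb2 (by rw [h, parIter_rootV])
      obtain ⟨q₁, hq₁M, hin1⟩ := hM.hcov l hfr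
      obtain ⟨q₂, hq₂M, hin2⟩ := hM.hcov l' hfr'
      have hb1' : parIter T' p (g l) ≠ rootV T' := fun h => hb1 (tb1.mpr h)
      have hb2' : parIter T' q (g l') ≠ rootV T' := fun h => hb2 (tb2.mpr h)
      have hin1' : inSub T' q₁.2 (g l) := (hM.hmem q₁ hq₁M l).mp hin1
      have hin2' : inSub T' q₂.2 (g l') := (hM.hmem q₂ hq₂M l').mp hin2
      by_cases hqq : q₁ = q₂
      · subst hqq
        obtain ⟨h1, h2⟩ := hM.hchild q₁ hq₁M
        -- express both values inside the subtree
        have key : ∀ (U : RTree) (i : ℕ) (hU : [i] ∈ U.carrier) (z z' : U.V)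
            (hz : inSub U i z) (hz' : inSub U i z') (hp : parIter U p z ≠ rootV U)
            (hq : parIter U q z' ≠ rootV U),
            (parIter U p z = parIter U q z' ↔
              parIter (U.subtreeAt [i] hU) p (down hU z) =
                parIter (U.subtreeAt [i] hU) q (down hU z')) := by
          intro U i hU z z' hz hz' hpz hqz
          rw [ne_eq, parIter_eq_rootV_iff] at hpz hqz
          have ez : z = up hU (down hU z) := (up_down hU hz).symm
          have ez' : z' = up hU (down hU z') := (up_down hU hz').symm
          have hlp : p ≤ (down hU z).1.length := by
            rw [ez, length_up] at hpz; omega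
          have hlq : q ≤ (down hU z').1.length := by
            rw [ez', length_up] at hqz; omega
          conv_lhs => rw [ez, ez']
          rw [parIter_up_le hU _ hlp, parIter_up_le hU _ hlq]
          constructor
          · exact fun h => up_injective hU h
          · exact fun h => by rw [h]
        rw [key T q₁.1 h1 (f l) (f l') hin1 hin2 hb1 hb2,
          key T' q₁.2 h2 (g l) (g l') hin1' hin2' hb1' hb2']
        rw [← realize_Efml (T := T.subtreeAt [q₁.1] h1) p q l l' (fun e => e.elim)
          (fun l'' => down h1 (f l'')),
          ← realize_Efml (T := T'.subtreeAt [q₁.2] h2) p q l l' (fun e => e.elim)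
          (fun l'' => down h2 (g l''))]
        exact hM.hθ q₁ hq₁M h1 h2 _ (by simp)
      · -- different subtrees: both sides false
        have hne1 : q₁.1 ≠ q₂.1 := fun h => hqq (hM.hinj1 q₁ hq₁M q₂ hq₂M h)
        have hne2 : q₁.2 ≠ q₂.2 := fun h => hqq (hM.hinj2 q₁ hq₁M q₂ hq₂M h)
        refine iff_of_false ?_ ?_
        · intro h
          apply hne1
          exact inSub_unique (inSub_parIter hin1 hb1) (h ▸ inSub_parIter hin2 hb2)
        · intro h
          apply hne2
          exact inSub_unique (inSub_parIter hin1' hb1') (h ▸ inSub_parIter hin2' hb2')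

end RTree

namespace RTree

open FirstOrder Language

/-! ### The interface lemma: truth is determined by local formulas and counts -/

theorem exists_interface {n : ℕ} (φ : treeLang.BoundedFormula Empty n) :
    ∃ (Θ : List (treeLang.BoundedFormula Empty n)) (Ξ : List (treeLang.Sentence × ℕ)),
      (∀ θ ∈ Θ, θ.qdepth ≤ φ.qdepth) ∧
      (∀ q ∈ Ξ, 1 ≤ q.1.qdepth ∧ q.1.qdepth ≤ φ.qdepth ∧ q.2 + q.1.qdepth ≤ φ.qdepth + 1) ∧
      ∀ (T T' : RTree) (f : Fin n → T.V) (g : Fin n → T'.V),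
        Sim Θ Ξ T T' f g →
        (φ.Realize (fun e => e.elim) f ↔ φ.Realize (fun e => e.elim) g) := by
  induction φ with
  | falsum => exact ⟨[], [], by simp, by simp, fun T T' f g _ => Iff.rfl⟩
  | equal t₁ t₂ =>
      obtain ⟨Θ, hΘ, htr⟩ := atomic_transfer t₁ t₂
      exact ⟨Θ, [], fun θ h => by rw [hΘ θ h]; exact Nat.zero_le _, by simp,
        fun T T' f g hs => htr T T' f g hs⟩
  | rel r ts => exact (show Empty from r).elim
  | imp φ ψ ihφ ihψ =>
      obtain ⟨Θ1, Ξ1, hb1, hc1, tr1⟩ := ihφ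
      obtain ⟨Θ2, Ξ2, hb2, hc2, tr2⟩ := ihψ
      refine ⟨Θ1 ++ Θ2, Ξ1 ++ Ξ2, ?_, ?_, ?_⟩
      · intro θ hθ
        rcases List.mem_append.mp hθ with h | h
        · exact le_trans (hb1 θ h) (le_max_left _ _)
        · exact le_trans (hb2 θ h) (le_max_right _ _)
      · intro q hq
        have e : (φ.imp ψ).qdepth = max φ.qdepth ψ.qdepth := rfl
        rcases List.mem_append.mp hq with h | h
        · obtain ⟨u1, u2, u3⟩ := hc1 q h
          exact ⟨u1, by rw [e]; omega, by rw [e]; omega⟩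
        · obtain ⟨u1, u2, u3⟩ := hc2 q h
          exact ⟨u1, by rw [e]; omega, by rw [e]; omega⟩
      · intro T T' f g hs
        rw [BoundedFormula.realize_imp, BoundedFormula.realize_imp]
        have s1 := tr1 T T' f g (hs.mono
          (fun θ h => List.mem_append_left _ h) (fun q h => List.mem_append_left _ h))
        have s2 := tr2 T T' f g (hs.mono
          (fun θ h => List.mem_append_right _ h) (fun q h => List.mem_append_right _ h))
        rw [s1, s2]
  | all ψ ih =>
      obtain ⟨Θψ, Ξψ, hbθ, hbξ, tr⟩ := ih
      set Θh := Θψ ++ Ξψ.map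
        (fun q => (liftSentence q.1 : treeLang.BoundedFormula Empty _)) with hΘh
      have hΘhb : ∀ θ ∈ Θh, θ.qdepth ≤ ψ.qdepth := by
        intro θ hθ
        rcases List.mem_append.mp hθ with h | h
        · exact hbθ θ h
        · obtain ⟨q, hq, rfl⟩ := List.mem_map.mp h
          rw [qdepth_liftSentence]
          exact (hbξ q hq).2.1
      have hlift : ∀ q ∈ Ξψ,
          (liftSentence q.1 : treeLang.BoundedFormula Empty _) ∈ Θh := by
        intro q hq
        exact List.mem_append_right _ (List.mem_map.mpr ⟨q, hq, rfl⟩)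
      refine ⟨extTh Θh, extXi Θh Ξψ, ?_, ?_, ?_⟩
      · intro θ hθ
        rw [extTh] at hθ
        rcases List.mem_append.mp hθ with h | h
        · obtain ⟨θ', hθ', rfl⟩ := List.mem_map.mp h
          rw [qdepth_substLastRoot]
          show θ'.qdepth ≤ ψ.qdepth + 1
          exact le_trans (hΘhb θ' hθ') (by omega)
        · obtain ⟨P, hP, rfl⟩ := List.mem_map.mp h
          rw [qdepth_ex]
          show (pattern Θh P).qdepth + 1 ≤ ψ.qdepth + 1
          have := qdepth_pattern_le Θh P ψ.qdepth hΘhb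
          omega
      · intro q hq
        rw [extXi] at hq
        rcases List.mem_append.mp hq with h | h
        · rcases List.mem_append.mp h with h' | h'
          · obtain ⟨u1, u2, u3⟩ := hbξ q h'
            exact ⟨u1, by show _ ≤ ψ.qdepth + 1; omega, by
              show _ ≤ ψ.qdepth + 1 + 1; omega⟩
          · obtain ⟨q', hq', rfl⟩ := List.mem_map.mp h'
            obtain ⟨u1, u2, u3⟩ := hbξ q' hq'
            exact ⟨u1, by show _ ≤ ψ.qdepth + 1; simp only []; omega, by
              show q'.2 + 1 + q'.1.qdepth ≤ ψ.qdepth + 1 + 1; omega⟩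
        · obtain ⟨P, hP, rfl⟩ := List.mem_map.mp h
          have hd : (BoundedFormula.ex (padLast (pattern Θh P))).qdepth =
              (pattern Θh P).qdepth + 1 := by
            rw [qdepth_ex, qdepth_padLast]
          have := qdepth_pattern_le Θh P ψ.qdepth hΘhb
          refine ⟨by rw [hd]; omega, by rw [hd]; show _ ≤ ψ.qdepth + 1; omega, by
            rw [hd]; show 1 + _ ≤ ψ.qdepth + 1 + 1; omega⟩
      · intro T T' f g hs
        rw [BoundedFormula.realize_all, BoundedFormula.realize_all]
        constructor
        · intro hall a'
          obtain ⟨xx, hsim2⟩ := sim_extend Θh Ξψ hlift hs.symm a'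
          have hsim3 := hsim2.symm
          have := tr T T' _ _ (hsim3.mono
            (fun θ h => List.mem_append_left _ h) (fun q h => h))
          exact this.mp (hall xx)
        · intro hall a
          obtain ⟨y, hsim2⟩ := sim_extend Θh Ξψ hlift hs a
          have := tr T T' _ _ (hsim2.mono
            (fun θ h => List.mem_append_left _ h) (fun q h => h))
          exact this.mpr (hall y)

end RTree

namespace RTree

open FirstOrder Language

/-! ### Counting transfer -/

/-- The set of rootchildren of class `j`. -/
def classSet (k : ℕ) (T : RTree) (j : TreeClass k) : Set ℕ :=
  {i : ℕ | ∃ h : [i] ∈ T.carrier, EV k (T.subtreeAt [i] h) = j}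

/-- The set of rootchildren whose subtree satisfies `ξ`. -/
def satSet (T : RTree) (ξ : treeLang.Sentence) : Set ℕ :=
  {i : ℕ | ∃ h : [i] ∈ T.carrier, (T.subtreeAt [i] h).V ⊨ ξ}

lemma count_transfer_aux (k : ℕ) (T T' : RTree)
    (hmin : ∀ j : TreeClass k,
      min (k : ℕ∞) (classSet k T j).encard = min (k : ℕ∞) (classSet k T' j).encard)
    (ξ : treeLang.Sentence) (hξ : ξ.qdepth ≤ k) (t : ℕ) (ht : t ≤ k)
    (hle : (t : ℕ∞) ≤ (satSet T ξ).encard) : (t : ℕ∞) ≤ (satSet T' ξ).encard := by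
  classical
  set Jsat : TreeClass k → Prop :=
    Quotient.lift (fun S : RTree => S.V ⊨ ξ) (fun a b hab => propext (hab ξ hξ)) with hJsat
  have hJ : ∀ S : RTree, Jsat (EV k S) = (S.V ⊨ ξ) := fun S => rfl
  have hclass_sub : ∀ j, Jsat j → classSet k T' j ⊆ satSet T' ξ := by
    intro j hj i hi
    obtain ⟨hc, he⟩ := hi
    refine ⟨hc, ?_⟩
    rw [← hJ, he]
    exact hj
  by_cases hbig : ∃ j : TreeClass k, Jsat j ∧ (k : ℕ∞) ≤ (classSet k T j).encard
  · obtain ⟨j, hj, hjk⟩ := hbig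
    have h := hmin j
    rw [min_eq_left hjk] at h
    have : (k : ℕ∞) ≤ (classSet k T' j).encard := min_eq_left_iff.mp h.symm
    calc (t : ℕ∞) ≤ (k : ℕ∞) := Nat.cast_le.mpr ht
      _ ≤ (classSet k T' j).encard := this
      _ ≤ (satSet T' ξ).encard := Set.encard_mono (hclass_sub j hj)
  · push_neg at hbig
    have hexact : ∀ j, Jsat j → (classSet k T j).encard = (classSet k T' j).encard := by
      intro j hj
      have hlt := hbig j hj
      have h := hmin j
      rw [min_eq_right (le_of_lt hlt)] at h
      rcases le_total (k : ℕ∞) ((classSet k T' j).encard) with hh | hh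
      · rw [min_eq_left hh] at h
        exact absurd h (ne_of_lt hlt)
      · rw [min_eq_right hh] at h
        exact h
    obtain ⟨F, hFsub, hFcard⟩ := Set.exists_subset_encard_eq hle
    have hFfin : F.Finite := Set.finite_of_encard_eq_coe hFcard
    set cls : ℕ → TreeClass k := fun i =>
      if h : [i] ∈ T.carrier then EV k (T.subtreeAt [i] h) else EV k T with hcls
    set J₀ : Finset (TreeClass k) := hFfin.toFinset.image cls with hJ₀
    have hJ₀sat : ∀ j ∈ J₀, Jsat j := by
      intro j hj
      obtain ⟨i, hiF, rfl⟩ := Finset.mem_image.mp hj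
      rw [Set.Finite.mem_toFinset] at hiF
      obtain ⟨hc, hsat⟩ := hFsub hiF
      have : cls i = EV k (T.subtreeAt [i] hc) := dif_pos hc
      rw [this, hJ]
      exact hsat
    have hFsubU : F ⊆ ⋃ j ∈ J₀, classSet k T j := by
      intro i hi
      obtain ⟨hc, hsat⟩ := hFsub hi
      have hmem : cls i ∈ J₀ :=
        Finset.mem_image.mpr ⟨i, (Set.Finite.mem_toFinset hFfin).mpr hi, rfl⟩
      refine Set.mem_biUnion hmem ⟨hc, ?_⟩
      exact (show cls i = EV k (T.subtreeAt [i] hc) from dif_pos hc).symm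
    have hUkey : ∀ (J : Finset (TreeClass k)), (∀ j ∈ J, Jsat j) →
        (⋃ j ∈ J, classSet k T j).encard = (⋃ j ∈ J, classSet k T' j).encard := by
      intro J
      induction J using Finset.induction_on with
      | empty => simp
      | @insert a J ha ih =>
          intro hsat'
          rw [Finset.set_biUnion_insert, Finset.set_biUnion_insert]
          have hd1 : Disjoint (classSet k T a) (⋃ j ∈ J, classSet k T j) := by
            rw [Set.disjoint_left]
            rintro i ⟨hc, he⟩ hmem
            obtain ⟨j, hj, hc', he'⟩ := Set.mem_iUnion₂.mp hmem
            apply ha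
            rwa [← he, he']
          have hd2 : Disjoint (classSet k T' a) (⋃ j ∈ J, classSet k T' j) := by
            rw [Set.disjoint_left]
            rintro i ⟨hc, he⟩ hmem
            obtain ⟨j, hj, hc', he'⟩ := Set.mem_iUnion₂.mp hmem
            apply ha
            rwa [← he, he']
          rw [Set.encard_union_eq hd1, Set.encard_union_eq hd2,
            hexact a (hsat' a (Finset.mem_insert_self _ _)),
            ih (fun j hj => hsat' j (Finset.mem_insert_of_mem hj))]
    calc (t : ℕ∞) = F.encard := hFcard.symm
      _ ≤ (⋃ j ∈ J₀, classSet k T j).encard := Set.encard_mono hFsubU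
      _ = (⋃ j ∈ J₀, classSet k T' j).encard := hUkey J₀ hJ₀sat
      _ ≤ (satSet T' ξ).encard := by
          apply Set.encard_mono
          intro i hi
          obtain ⟨j, hj, hi'⟩ := Set.mem_iUnion₂.mp hi
          exact hclass_sub j (hJ₀sat j hj) hi'

end RTree

namespace RTree

open FirstOrder Language

theorem ev_determined_by_rootchild_counts' (k : ℕ) (T T' : RTree)
    (h : ∀ j : TreeClass k, childClassCount k T j = childClassCount k T' j) :
    TreeEquiv k T T' := by
  have hmin : ∀ j : TreeClass k,
      min (k : ℕ∞) (classSet k T j).encard = min (k : ℕ∞) (classSet k T' j).encard := by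
    intro j
    have h1 : min (k : ℕ∞) (classSet k T j).encard ≠ ⊤ := by
      intro hh
      have := min_le_left (k : ℕ∞) (classSet k T j).encard
      rw [hh] at this
      exact (ENat.coe_ne_top k) (top_le_iff.mp this)
    have h2 : min (k : ℕ∞) (classSet k T' j).encard ≠ ⊤ := by
      intro hh
      have := min_le_left (k : ℕ∞) (classSet k T' j).encard
      rw [hh] at this
      exact (ENat.coe_ne_top k) (top_le_iff.mp this)
    have e1 := ENat.coe_toNat h1
    have e2 := ENat.coe_toNat h2
    have e3 : (min (k : ℕ∞) (classSet k T j).encard).toNat =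
        (min (k : ℕ∞) (classSet k T' j).encard).toNat := h j
    rw [← e1, ← e2, e3]
  intro A hA
  obtain ⟨Θ, Ξ, hbθ, hbξ, tr⟩ := exists_interface A
  have hsim : Sim Θ Ξ T T' (fun l : Fin 0 => l.elim0) (fun l : Fin 0 => l.elim0) := by
    refine ⟨[], ?_, ?_, ?_, ?_, ?_, ?_, ?_, ?_, ?_⟩
    · intro p hp; exact absurd hp List.not_mem_nil
    · intro p hp; exact absurd hp List.not_mem_nil
    · intro p hp; exact absurd hp List.not_mem_nil
    · intro l; exact l.elim0
    · intro p hp; exact absurd hp List.not_mem_nil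
    · intro l; exact l.elim0
    · intro l; exact l.elim0
    · intro p hp; exact absurd hp List.not_mem_nil
    · intro q hq
      obtain ⟨u1, u2, u3⟩ := hbξ q hq
      have hqd : q.1.qdepth ≤ k := le_trans u2 hA
      have hqt : q.2 ≤ k := by
        have := hA
        omega
      have e1 : freshSet T (([] : List (ℕ × ℕ)).map Prod.fst) q.1 = satSet T q.1 := by
        ext i
        simp [freshSet, satSet]
      have e2 : freshSet T' (([] : List (ℕ × ℕ)).map Prod.snd) q.1 = satSet T' q.1 := by
        ext i
        simp [freshSet, satSet]
      rw [e1, e2]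
      constructor
      · exact count_transfer_aux k T T' hmin q.1 hqd q.2 hqt
      · exact count_transfer_aux k T' T (fun j => (hmin j).symm) q.1 hqd q.2 hqt
  have := tr T T' _ _ hsim
  rw [sentence_realize_iff A (fun e => e.elim) (fun l : Fin 0 => l.elim0),
    sentence_realize_iff A (fun e => e.elim) (fun l : Fin 0 => l.elim0)]
  exact this

end RTree

namespace RTree

/-- **Theorem (the Ehrenfeucht value is determined by the rootchild classes).**
Fix a positive integer `k`.  If, for every class `j ∈ Σ_k`, the trees `T` and `T'` have
the same number `n_j ∈ C = {0, 1, …, k-1, ω}` of rootchildren `v` with `EV[T(v)] = j`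
(the value `ω = k` meaning "at least `k`" and a value `n < k` meaning "exactly `n`"),
then `T ≡_k T'`; consequently the Ehrenfeucht value `EV[T]` is uniquely determined by
the vector of truncated counts. -/
theorem ev_determined_by_rootchild_counts (k : ℕ) (hk : 0 < k) (T T' : RTree)
    (h : ∀ j : TreeClass k, childClassCount k T j = childClassCount k T' j) :
    TreeEquiv k T T' ∧ EV k T = EV k T' := by
  have key := ev_determined_by_rootchild_counts' k T T' h
  exact ⟨key, Quotient.sound key⟩

end RTree
end

section
/- For every c with 0 < c < 1 and all x⃗, y⃗ ∈ D, TV(Ψ_c(x⃗), Ψ_c(y⃗)) ≤ c · TV(x⃗, y⃗). -/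
open FirstOrder MeasureTheory
open scoped Classical

namespace RTree

/-- Join a collection of rooted trees below a common new root. -/
def joinTree (f : ℕ → Option RTree) : RTree where
  carrier := {[]} ∪ {l | ∃ i T w, f i = some T ∧ w ∈ T.carrier ∧ l = i :: w}
  root_mem := Or.inl rfl
  dropLast_mem := by
    rintro v (rfl | ⟨i, T, w, hf, hw, rfl⟩)
    · exact Or.inl rfl
    · cases w with
      | nil => exact Or.inl (by simp)
      | cons a as =>
        exact Or.inr ⟨i, T, (a :: as).dropLast, hf, T.dropLast_mem _ hw, rfl⟩

/-- The recursion function `Γ`: given truncated counts `a j` of rootchildren of each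
Ehrenfeucht class `j` (counts `≥ k` being identified with `ω`), it returns the
Ehrenfeucht value of any (equivalently, of a canonical) tree whose root has, for each
`j`, `a j` rootchildren whose subtrees lie in class `j`. -/
noncomputable def recursionFun (k : ℕ) [Fintype (TreeClass k)]
    (a : TreeClass k → ℕ) : TreeClass k :=
  EV k (joinTree (fun n =>
    if h : n.unpair.1 < Fintype.card (TreeClass k) then
      if n.unpair.2 < min (a ((Fintype.equivFin (TreeClass k)).symm ⟨n.unpair.1, h⟩)) k then
        some (Quotient.out ((Fintype.equivFin (TreeClass k)).symm ⟨n.unpair.1, h⟩))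
      else none
    else none))

/-- `P[n = u]` for `n` a `Poisson(lam)` variable truncated at `ω = k`: for `u < k` this
is `e^{-lam} lam^u / u!`, and for `u = k` (representing `ω`) it is the remaining mass
`1 - Σ_{v<k} e^{-lam} lam^v / v!`. -/
noncomputable def poisTrunc (lam : ℝ) (k : ℕ) (u : ℕ) : ℝ :=
  if u < k then Real.exp (-lam) * lam ^ u / u.factorial
  else 1 - ∑ v ∈ Finset.range k, Real.exp (-lam) * lam ^ v / v.factorial

/-- The map `Ψ_c : D → D`: the root is given a `Poisson(c)` number of children, each
child independently receives a class `j` with probability `x j`; the (truncated) counts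
`n_j` are then independent (truncated) `Poisson(c x_j)` variables, and `Ψ_c(x) j` is the
probability that `Γ(n⃗) = j`. -/
noncomputable def PsiMap (k : ℕ) [Fintype (TreeClass k)] (c : ℝ)
    (x : TreeClass k → ℝ) : TreeClass k → ℝ := fun j =>
  ∑ a : TreeClass k → Fin (k + 1),
    (if recursionFun k (fun i => (a i : ℕ)) = j then ∏ i, poisTrunc (c * x i) k (a i)
     else 0)

/-- `D`: the simplex of probability distributions over `Σₖ`. -/
def simplexD (k : ℕ) [Fintype (TreeClass k)] : Set (TreeClass k → ℝ) :=
  {x | (∀ j, 0 ≤ x j) ∧ ∑ j, x j = 1}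

/-- The total variation distance `TV(x,y) = (1/2) Σ_j |x_j - y_j|`. -/
noncomputable def tvDist {ι : Type*} [Fintype ι] (x y : ι → ℝ) : ℝ :=
  (∑ j, |x j - y j|) / 2

/-- The Euclidean metric `ρ` on `ℝ^m`. -/
noncomputable def euclDist {ι : Type*} [Fintype ι] (x y : ι → ℝ) : ℝ :=
  Real.sqrt (∑ j, (x j - y j) ^ 2)

end RTree
namespace RTree

section TVAux

open Finset

variable {k : ℕ}

/-- Exact Poisson weight. -/
private noncomputable def pw (lam : ℝ) (n : ℕ) : ℝ := Real.exp (-lam) * lam ^ n / n.factorial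

private lemma poisTrunc_of_lt {lam : ℝ} {u : ℕ} (h : u < k) : poisTrunc lam k u = pw lam u := by
  simp [poisTrunc, pw, h]

private lemma poisTrunc_of_ge {lam : ℝ} {u : ℕ} (h : ¬ u < k) :
    poisTrunc lam k u = 1 - ∑ v ∈ range k, pw lam v := by
  simp [poisTrunc, pw, h]

private lemma pw_nonneg {lam : ℝ} (h : 0 ≤ lam) (n : ℕ) : 0 ≤ pw lam n := by
  unfold pw; positivity

private lemma sum_pw_le {lam : ℝ} (h : 0 ≤ lam) (n : ℕ) : ∑ v ∈ range n, pw lam v ≤ 1 := by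
  have h1 : ∑ v ∈ range n, pw lam v = Real.exp (-lam) * ∑ v ∈ range n, lam ^ v / v.factorial := by
    rw [mul_sum]; exact sum_congr rfl fun v _ => by unfold pw; ring
  rw [h1]
  calc Real.exp (-lam) * ∑ v ∈ range n, lam ^ v / v.factorial
      ≤ Real.exp (-lam) * Real.exp lam :=
        mul_le_mul_of_nonneg_left (Real.sum_le_exp_of_nonneg h n) (Real.exp_pos _).le
    _ = 1 := by rw [← Real.exp_add]; simp

private lemma poisTrunc_nonneg' {lam : ℝ} (h : 0 ≤ lam) (u : ℕ) : 0 ≤ poisTrunc lam k u := by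
  by_cases hu : u < k
  · rw [poisTrunc_of_lt hu]; exact pw_nonneg h u
  · rw [poisTrunc_of_ge hu]; linarith [sum_pw_le h k]

private lemma sum_poisTrunc (lam : ℝ) : ∑ u : Fin (k+1), poisTrunc lam k (u : ℕ) = 1 := by
  rw [Fin.sum_univ_eq_sum_range (fun u => poisTrunc lam k u) (k+1), Finset.sum_range_succ]
  rw [Finset.sum_congr rfl (fun u hu => poisTrunc_of_lt (mem_range.mp hu)),
    poisTrunc_of_ge (lt_irrefl k)]
  ring

private lemma poisTrunc_zero_apply (hk : 0 < k) (lam : ℝ) :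
    poisTrunc lam k 0 = Real.exp (-lam) := by
  rw [poisTrunc_of_lt hk]; simp [pw]

private lemma pw_conv (lam mu : ℝ) (n : ℕ) :
    ∑ p ∈ range (n+1), pw lam p * pw mu (n - p) = pw (lam + mu) n := by
  have key : ∀ p ∈ range (n+1), pw lam p * pw mu (n - p)
      = Real.exp (-(lam+mu)) * (lam ^ p * mu ^ (n - p) * (n.choose p : ℝ)) / n.factorial := by
    intro p hp
    have hpn : p ≤ n := Nat.lt_succ_iff.mp (mem_range.mp hp)
    have hfac : (n.factorial : ℝ) = (n.choose p : ℝ) * (p.factorial : ℝ) * ((n-p).factorial : ℝ) := by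
      exact_mod_cast (Nat.choose_mul_factorial_mul_factorial hpn).symm
    have h1 : (p.factorial : ℝ) ≠ 0 := Nat.cast_ne_zero.mpr p.factorial_ne_zero
    have h2 : ((n-p).factorial : ℝ) ≠ 0 := Nat.cast_ne_zero.mpr (n-p).factorial_ne_zero
    have h3 : (n.choose p : ℝ) ≠ 0 := Nat.cast_ne_zero.mpr (Nat.choose_pos hpn).ne'
    unfold pw
    rw [hfac, neg_add, Real.exp_add]
    field_simp
  rw [sum_congr rfl key]
  have : ∑ p ∈ range (n+1), Real.exp (-(lam+mu)) * (lam ^ p * mu ^ (n - p) * (n.choose p : ℝ)) / n.factorial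
      = Real.exp (-(lam+mu)) * (∑ p ∈ range (n+1), lam ^ p * mu ^ (n - p) * (n.choose p : ℝ)) / n.factorial := by
    rw [mul_sum, sum_div]
  rw [this, ← add_pow]
  rfl

private lemma sum_fin_ind {m : ℕ} (hm : m ≤ k) (P : ℝ) :
    ∑ u : Fin (k+1), (if m = (u : ℕ) then P else 0) = P := by
  rw [Finset.sum_eq_single (⟨m, by omega⟩ : Fin (k+1))]
  · simp
  · intro v _ hv
    rw [if_neg]
    intro hc
    exact hv (by apply Fin.ext; simp [← hc])
  · intro h; exact absurd (mem_univ _) h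

private lemma truncConv (lam mu : ℝ) (u : ℕ) (hu : u ≤ k) :
    (∑ a : Fin (k+1), ∑ b : Fin (k+1),
      (if min ((a:ℕ) + (b:ℕ)) k = u then poisTrunc lam k (a:ℕ) * poisTrunc mu k (b:ℕ) else 0))
      = poisTrunc (lam + mu) k u := by
  set S : ℕ → ℝ := fun u => ∑ a : Fin (k+1), ∑ b : Fin (k+1),
      (if min ((a:ℕ) + (b:ℕ)) k = u then poisTrunc lam k (a:ℕ) * poisTrunc mu k (b:ℕ) else 0)
    with hS
  have hlt : ∀ u : ℕ, u < k → S u = pw (lam + mu) u := by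
    intro u hu
    have inner : ∀ a : Fin (k+1),
        (∑ b : Fin (k+1), if min ((a:ℕ) + (b:ℕ)) k = u then poisTrunc lam k (a:ℕ) * poisTrunc mu k (b:ℕ) else 0)
          = if (a:ℕ) ≤ u then pw lam (a:ℕ) * pw mu (u - (a:ℕ)) else 0 := by
      intro a
      by_cases ha : (a:ℕ) ≤ u
      · rw [if_pos ha, Finset.sum_eq_single (⟨u - (a:ℕ), by omega⟩ : Fin (k+1))]
        · rw [if_pos (by simp; omega)]
          rw [poisTrunc_of_lt (by omega), poisTrunc_of_lt (by simp; omega)]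
        · intro b _ hb
          rw [if_neg]
          intro hc
          exact hb (by apply Fin.ext; simp; omega)
        · intro h; exact absurd (mem_univ _) h
      · rw [if_neg ha]
        apply Finset.sum_eq_zero
        intro b _
        rw [if_neg]
        intro hc
        omega
    simp only [hS]
    rw [Finset.sum_congr rfl (fun a _ => inner a)]
    rw [Fin.sum_univ_eq_sum_range (fun p => if p ≤ u then pw lam p * pw mu (u - p) else 0) (k+1)]
    rw [← Finset.sum_subset (Finset.range_subset_range.mpr (by omega : u + 1 ≤ k + 1))
      (fun p _ hp => if_neg (by simp at hp ⊢; omega))]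
    rw [Finset.sum_congr rfl (fun p hp => if_pos (by simp at hp; omega))]
    exact pw_conv lam mu u
  have htot : ∑ u' ∈ range (k+1), S u' = 1 := by
    rw [← Fin.sum_univ_eq_sum_range (fun u' => S u') (k+1)]
    simp only [hS]
    rw [Finset.sum_comm]
    have : ∀ a : Fin (k+1),
        (∑ u' : Fin (k+1), ∑ b : Fin (k+1),
          if min ((a:ℕ) + (b:ℕ)) k = (u':ℕ) then poisTrunc lam k (a:ℕ) * poisTrunc mu k (b:ℕ) else 0)
        = ∑ b : Fin (k+1), poisTrunc lam k (a:ℕ) * poisTrunc mu k (b:ℕ) := by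
      intro a
      rw [Finset.sum_comm]
      exact Finset.sum_congr rfl fun b _ => sum_fin_ind (by omega) _
    rw [Finset.sum_congr rfl (fun a _ => this a)]
    rw [← Finset.sum_mul_sum]
    rw [sum_poisTrunc, sum_poisTrunc, mul_one]
  rcases lt_or_eq_of_le hu with h | h
  · rw [poisTrunc_of_lt h]; exact hlt u h
  · subst h
    have h2 : ∑ u' ∈ range u, S u' + S u = 1 := by rw [← Finset.sum_range_succ]; exact htot
    have h3 : ∑ u' ∈ range u, S u' = ∑ v ∈ range u, pw (lam + mu) v :=
      Finset.sum_congr rfl fun v hv => hlt v (mem_range.mp hv)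
    rw [poisTrunc_of_ge (lt_irrefl u)]
    linarith

private lemma ind_split (z S u : ℕ) :
    (if min (z + S) k = u then (1:ℝ) else 0)
      = ∑ v : Fin (k+1), (if min S k = (v:ℕ) then (1:ℝ) else 0) *
          (if min (z + (v:ℕ)) k = u then (1:ℝ) else 0) := by
  have hmm : min (z + S) k = min (z + min S k) k := by omega
  rw [hmm, Finset.sum_eq_single (⟨min S k, by omega⟩ : Fin (k+1))]
  · simp
  · intro v _ hv
    rw [if_neg, zero_mul]
    intro hc
    exact hv (by apply Fin.ext; simp [← hc])
  · intro h; exact absurd (mem_univ _) h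

private lemma convStep {β : Type*} [Fintype β] (lam mu : ℝ) (P : β → ℝ) (S : β → ℕ)
    (hP : ∀ v : ℕ, v ≤ k →
      ∑ g : β, P g * (if min (S g) k = v then (1:ℝ) else 0) = poisTrunc mu k v)
    (u : ℕ) (hu : u ≤ k) :
    ∑ z : Fin (k+1), ∑ g : β,
      (poisTrunc lam k (z:ℕ) * P g) * (if min ((z:ℕ) + S g) k = u then (1:ℝ) else 0)
      = poisTrunc (lam + mu) k u := by
  have step1 : ∀ (z : Fin (k+1)) (g : β),
      (poisTrunc lam k (z:ℕ) * P g) * (if min ((z:ℕ) + S g) k = u then (1:ℝ) else 0)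
        = ∑ v : Fin (k+1), (P g * (if min (S g) k = (v:ℕ) then (1:ℝ) else 0)) *
            (poisTrunc lam k (z:ℕ) * (if min ((z:ℕ) + (v:ℕ)) k = u then (1:ℝ) else 0)) := by
    intro z g
    rw [ind_split (z:ℕ) (S g) u, Finset.mul_sum]
    exact sum_congr rfl fun v _ => by ring
  calc ∑ z : Fin (k+1), ∑ g : β,
      (poisTrunc lam k (z:ℕ) * P g) * (if min ((z:ℕ) + S g) k = u then (1:ℝ) else 0)
      = ∑ z : Fin (k+1), ∑ v : Fin (k+1),
          (∑ g : β, P g * (if min (S g) k = (v:ℕ) then (1:ℝ) else 0)) *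
            (poisTrunc lam k (z:ℕ) * (if min ((z:ℕ) + (v:ℕ)) k = u then (1:ℝ) else 0)) := by
        refine sum_congr rfl fun z _ => ?_
        rw [Finset.sum_congr rfl fun g _ => step1 z g, Finset.sum_comm]
        exact sum_congr rfl fun v _ => by rw [Finset.sum_mul]
    _ = ∑ z : Fin (k+1), ∑ v : Fin (k+1),
          (if min ((z:ℕ) + (v:ℕ)) k = u then poisTrunc lam k (z:ℕ) * poisTrunc mu k (v:ℕ) else 0) := by
        refine sum_congr rfl fun z _ => sum_congr rfl fun v _ => ?_
        rw [hP (v:ℕ) (by omega)]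
        split_ifs <;> ring
    _ = poisTrunc (lam + mu) k u := truncConv lam mu u hu

set_option maxHeartbeats 1000000 in
private lemma multiConv : ∀ (M : ℕ) (η : Fin M → ℝ) (u : ℕ), u ≤ k →
    (∑ b : Fin M → Fin (k+1), (∏ t, poisTrunc (η t) k ((b t : ℕ))) *
      (if min (∑ t, ((b t) : ℕ)) k = u then (1:ℝ) else 0))
      = poisTrunc (∑ t, η t) k u := by
  intro M
  induction M with
  | zero =>
    intro η u hu
    rw [Fintype.sum_unique]
    simp only [Finset.univ_eq_empty, Finset.prod_empty, Finset.sum_empty, one_mul, Nat.zero_min]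
    by_cases hu0 : u = 0
    · subst hu0
      rw [if_pos rfl]
      by_cases hk0 : 0 < k
      · rw [poisTrunc_of_lt hk0]; simp [pw]
      · rw [poisTrunc_of_ge (by omega)]
        simp [show k = 0 by omega]
    · rw [if_neg (fun hc => hu0 hc.symm)]
      by_cases huk : u < k
      · rw [poisTrunc_of_lt huk]
        simp [pw, zero_pow hu0]
      · have hk0 : 0 < k := by omega
        rw [poisTrunc_of_ge huk]
        have : ∑ v ∈ range k, pw 0 v = 1 := by
          rw [Finset.sum_eq_single 0]
          · simp [pw]
          · intro v _ hv; simp [pw, zero_pow hv]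
          · intro h; exact absurd (Finset.mem_range.mpr hk0) h
        rw [this]; ring
  | succ M ih =>
    intro η u hu
    rw [← Equiv.sum_comp (Fin.consEquiv (fun _ : Fin (M+1) => Fin (k+1)))
      (fun b => (∏ t, poisTrunc (η t) k ((b t : ℕ))) *
        (if min (∑ t, ((b t) : ℕ)) k = u then (1:ℝ) else 0))]
    rw [Fintype.sum_prod_type]
    have hterm : ∀ (z : Fin (k+1)) (g : Fin M → Fin (k+1)),
        ((∏ t, poisTrunc (η t) k (((Fin.consEquiv (fun _ : Fin (M+1) => Fin (k+1))) (z, g) t : ℕ))) *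
          (if min (∑ t, (((Fin.consEquiv (fun _ : Fin (M+1) => Fin (k+1))) (z, g) t) : ℕ)) k = u
            then (1:ℝ) else 0))
        = (poisTrunc (η 0) k (z:ℕ) * ∏ t, poisTrunc (η t.succ) k ((g t : ℕ))) *
            (if min ((z:ℕ) + ∑ t, ((g t) : ℕ)) k = u then (1:ℝ) else 0) := by
      intro z g
      have h1 : (Fin.consEquiv (fun _ : Fin (M+1) => Fin (k+1))) (z, g) = Fin.cons z g := rfl
      rw [h1, Fin.prod_univ_succ, Fin.sum_univ_succ]
      simp [Fin.cons_zero, Fin.cons_succ]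
    rw [Finset.sum_congr rfl fun z _ => Finset.sum_congr rfl fun g _ => hterm z g]
    rw [show ∑ t : Fin (M+1), η t = η 0 + ∑ t : Fin M, η t.succ from Fin.sum_univ_succ η]
    exact convStep _ _ _ _ (fun v hv => ih (fun t => η t.succ) v hv) u hu

private lemma multiConv' {τ : Type*} [Fintype τ] (η : τ → ℝ) (u : ℕ) (hu : u ≤ k) :
    (∑ b : τ → Fin (k+1), (∏ t, poisTrunc (η t) k ((b t : ℕ))) *
      (if min (∑ t, ((b t) : ℕ)) k = u then (1:ℝ) else 0))
      = poisTrunc (∑ t, η t) k u := by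
  classical
  have base := multiConv (k := k) (Fintype.card τ) (η ∘ (Fintype.equivFin τ).symm) u hu
  rw [show ∑ t', (η ∘ (Fintype.equivFin τ).symm) t' = ∑ t, η t from
    Equiv.sum_comp (Fintype.equivFin τ).symm η] at base
  rw [← base]
  apply Fintype.sum_equiv ((Fintype.equivFin τ).arrowCongr (Equiv.refl (Fin (k+1))))
  intro b
  congr 1
  · exact ((Fintype.equivFin τ).symm.prod_comp
      (fun t => poisTrunc (η t) k ((b t : ℕ)))).symm
  · exact congrArg (fun S => if min S k = u then (1:ℝ) else 0)
      (((Fintype.equivFin τ).symm.sum_comp (fun t => ((b t) : ℕ))).symm)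

private lemma pairConv {τ : Type*} [Fintype τ] (lam : ℝ) (η : τ → ℝ) (u : ℕ) (hu : u ≤ k) :
    ∑ z : Fin (k+1), ∑ g : τ → Fin (k+1),
      (poisTrunc lam k (z:ℕ) * ∏ t, poisTrunc (η t) k ((g t : ℕ))) *
        (if min ((z:ℕ) + ∑ t, ((g t) : ℕ)) k = u then (1:ℝ) else 0)
      = poisTrunc (lam + ∑ t, η t) k u :=
  convStep lam (∑ t, η t) _ _ (fun v hv => multiConv' η v hv) u hu

private lemma sum_prod_fun {ι β : Type*} [Fintype ι] [Fintype β] (g : ι → β → ℝ) :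
    ∑ f : ι → β, ∏ i, g i (f i) = ∏ i, ∑ z : β, g i z := by
  classical
  symm
  rw [Finset.prod_univ_sum]
  exact Finset.sum_congr Fintype.piFinset_univ fun _ _ => rfl

set_option maxHeartbeats 1000000 in
private lemma marginal_calc {ι : Type*} [Fintype ι] (ρ : ι → ℝ) (ω : ι → ι → ℝ)
    (α : ι → Fin (k+1)) :
    (∑ a : ι → Fin (k+1), ∑ b : ι → ι → Fin (k+1),
      ((∏ i, poisTrunc (ρ i) k ((a i : ℕ))) * (∏ i, ∏ i', poisTrunc (ω i i') k ((b i i' : ℕ)))) *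
        (∏ i, (if min ((a i : ℕ) + ∑ i', ((b i i') : ℕ)) k = ((α i) : ℕ) then (1:ℝ) else 0)))
      = ∏ i, poisTrunc (ρ i + ∑ i', ω i i') k ((α i : ℕ)) := by
  classical
  have merge : ∀ (a : ι → Fin (k+1)) (b : ι → ι → Fin (k+1)),
      ((∏ i, poisTrunc (ρ i) k ((a i:ℕ))) * (∏ i, ∏ i', poisTrunc (ω i i') k ((b i i':ℕ)))) *
        (∏ i, (if min ((a i:ℕ) + ∑ i', ((b i i'):ℕ)) k = ((α i):ℕ) then (1:ℝ) else 0))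
        = ∏ i, ((poisTrunc (ρ i) k ((a i:ℕ)) * ∏ i', poisTrunc (ω i i') k ((b i i':ℕ))) *
            (if min ((a i:ℕ) + ∑ i', ((b i i'):ℕ)) k = ((α i):ℕ) then (1:ℝ) else 0)) := by
    intro a b
    rw [Finset.prod_mul_distrib, Finset.prod_mul_distrib]
  rw [Finset.sum_congr rfl fun a _ => Finset.sum_congr rfl fun b _ => merge a b]
  have hb : ∀ a : ι → Fin (k+1),
      (∑ b : ι → ι → Fin (k+1), ∏ i,
        ((poisTrunc (ρ i) k ((a i:ℕ)) * ∏ i', poisTrunc (ω i i') k ((b i i':ℕ))) *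
          (if min ((a i:ℕ) + ∑ i', ((b i i'):ℕ)) k = ((α i):ℕ) then (1:ℝ) else 0)))
      = ∏ i, ∑ z : ι → Fin (k+1),
          ((poisTrunc (ρ i) k ((a i:ℕ)) * ∏ i', poisTrunc (ω i i') k ((z i':ℕ))) *
            (if min ((a i:ℕ) + ∑ i', ((z i'):ℕ)) k = ((α i):ℕ) then (1:ℝ) else 0)) :=
    fun a => sum_prod_fun (fun i (z : ι → Fin (k+1)) =>
      (poisTrunc (ρ i) k ((a i:ℕ)) * ∏ i', poisTrunc (ω i i') k ((z i':ℕ))) *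
        (if min ((a i:ℕ) + ∑ i', ((z i'):ℕ)) k = ((α i):ℕ) then (1:ℝ) else 0))
  rw [Finset.sum_congr rfl fun a _ => hb a]
  rw [sum_prod_fun (fun i (zz : Fin (k+1)) => ∑ z : ι → Fin (k+1),
      ((poisTrunc (ρ i) k ((zz:ℕ)) * ∏ i', poisTrunc (ω i i') k ((z i':ℕ))) *
        (if min ((zz:ℕ) + ∑ i', ((z i'):ℕ)) k = ((α i):ℕ) then (1:ℝ) else 0)))]
  refine Finset.prod_congr rfl fun i _ => ?_
  exact pairConv (ρ i) (ω i) ((α i):ℕ) (Nat.lt_succ_iff.mp (α i).isLt)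

private lemma tvDist_push {γ ι : Type*} [Fintype γ] [Fintype ι] (G : γ → ι) (μ ν : γ → ℝ) :
    tvDist (fun j => ∑ α, if G α = j then μ α else 0)
      (fun j => ∑ α, if G α = j then ν α else 0) ≤ tvDist μ ν := by
  classical
  have main : ∑ j, |(∑ α, if G α = j then μ α else 0) - (∑ α, if G α = j then ν α else 0)|
      ≤ ∑ α, |μ α - ν α| := by
    have h1 : ∀ j, |(∑ α, if G α = j then μ α else 0) - (∑ α, if G α = j then ν α else 0)|
        ≤ ∑ α, if G α = j then |μ α - ν α| else 0 := by
      intro j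
      rw [← Finset.sum_sub_distrib]
      refine (Finset.abs_sum_le_sum_abs _ _).trans (le_of_eq ?_)
      refine Finset.sum_congr rfl fun α _ => ?_
      split_ifs <;> simp
    refine (Finset.sum_le_sum fun j _ => h1 j).trans (le_of_eq ?_)
    rw [Finset.sum_comm]
    refine Finset.sum_congr rfl fun α _ => ?_
    simp
  unfold tvDist
  linarith

private lemma tvDist_le_offdiag {γ : Type*} [Fintype γ] [DecidableEq γ] (W : γ → γ → ℝ)
    (hW : ∀ p q, 0 ≤ W p q) (μ ν : γ → ℝ)
    (hμ : ∀ p, ∑ q, W p q = μ p) (hν : ∀ q, ∑ p, W p q = ν q) :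
    tvDist μ ν ≤ ∑ p, ∑ q, if p = q then 0 else W p q := by
  classical
  have key : ∀ p, |μ p - ν p|
      ≤ (∑ q, if p = q then 0 else W p q) + (∑ q, if p = q then 0 else W q p) := by
    intro p
    have e1 : ∑ q, (if p = q then 0 else W p q) = μ p - W p p := by
      rw [← hμ p]
      have h : ∀ q, (if p = q then (0:ℝ) else W p q)
          = W p q - (if p = q then W p q else 0) := by
        intro q; split_ifs <;> simp
      rw [Finset.sum_congr rfl fun q _ => h q, Finset.sum_sub_distrib,
        Finset.sum_ite_eq Finset.univ p (fun q => W p q)]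
      simp
    have e2 : ∑ q, (if p = q then 0 else W q p) = ν p - W p p := by
      rw [← hν p]
      have h : ∀ q, (if p = q then (0:ℝ) else W q p)
          = W q p - (if p = q then W q p else 0) := by
        intro q; split_ifs <;> simp
      rw [Finset.sum_congr rfl fun q _ => h q, Finset.sum_sub_distrib,
        Finset.sum_ite_eq Finset.univ p (fun q => W q p)]
      simp
    have n1 : (0:ℝ) ≤ ∑ q, (if p = q then 0 else W p q) :=
      Finset.sum_nonneg fun q _ => by split_ifs; exacts [le_rfl, hW p q]
    have n2 : (0:ℝ) ≤ ∑ q, (if p = q then 0 else W q p) :=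
      Finset.sum_nonneg fun q _ => by split_ifs; exacts [le_rfl, hW q p]
    rw [abs_sub_le_iff]
    constructor <;> linarith [e1, e2, n1, n2]
  have sum_key := Finset.sum_le_sum (fun p (_ : p ∈ Finset.univ) => key p)
  rw [Finset.sum_add_distrib] at sum_key
  have swap : ∑ p, ∑ q, (if p = q then (0:ℝ) else W q p)
      = ∑ p, ∑ q, (if p = q then 0 else W p q) := by
    rw [Finset.sum_comm]
    exact Finset.sum_congr rfl fun p _ => Finset.sum_congr rfl fun q _ =>
      if_congr eq_comm rfl rfl
  unfold tvDist
  rw [swap] at sum_key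
  linarith

private lemma prod_ind_eq {ι : Type*} [Fintype ι] (cv : ι → ℕ) (h : ∀ i, cv i ≤ k)
    (α : ι → Fin (k+1)) :
    ∏ i, (if cv i = ((α i):ℕ) then (1:ℝ) else 0)
      = if α = (fun i => (⟨cv i, Nat.lt_succ_of_le (h i)⟩ : Fin (k+1))) then 1 else 0 := by
  classical
  split_ifs with hα
  · subst hα; simp
  · obtain ⟨i, hi⟩ := Function.ne_iff.mp hα
    apply Finset.prod_eq_zero (Finset.mem_univ i)
    rw [if_neg]
    intro hc
    exact hi (by apply Fin.ext; simp [← hc])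

private lemma sum_prod_ind {ι : Type*} [Fintype ι] (cv : ι → ℕ) (h : ∀ i, cv i ≤ k) :
    ∑ β : ι → Fin (k+1), ∏ i, (if cv i = ((β i):ℕ) then (1:ℝ) else 0) = 1 := by
  classical
  rw [sum_prod_fun (fun i (z : Fin (k+1)) => if cv i = (z:ℕ) then (1:ℝ) else 0)]
  rw [Finset.prod_congr rfl fun i _ => sum_fin_ind (h i) (1:ℝ)]
  simp

private lemma offdiag_collapse {γ : Type*} [Fintype γ] [DecidableEq γ] (u v : γ) :
    ∑ p : γ, ∑ q : γ, (if p = q then (0:ℝ)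
        else (if p = u then (1:ℝ) else 0) * (if q = v then (1:ℝ) else 0))
      = if u = v then 0 else 1 := by
  classical
  rw [Finset.sum_eq_single u]
  · rw [Finset.sum_eq_single v]
    · split_ifs <;> simp_all
    · intro q _ hq; split_ifs <;> simp [hq]
    · intro hmem; exact absurd (Finset.mem_univ _) hmem
  · intro p _ hp; apply Finset.sum_eq_zero; intro q _; split_ifs <;> simp [hp]
  · intro hmem; exact absurd (Finset.mem_univ _) hmem

private lemma offdiag_collapse2 {γ : Type*} [Fintype γ] [DecidableEq γ] (K : ℝ) (u v : γ) :
    ∑ p : γ, ∑ q : γ, K * (if p = q then (0:ℝ)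
        else (if p = u then (1:ℝ) else 0) * (if q = v then (1:ℝ) else 0))
      = K * (if u = v then 0 else 1) := by
  classical
  have h1 : ∀ p : γ, ∑ q : γ, K * (if p = q then (0:ℝ)
        else (if p = u then (1:ℝ) else 0) * (if q = v then (1:ℝ) else 0))
      = K * ∑ q : γ, (if p = q then (0:ℝ)
        else (if p = u then (1:ℝ) else 0) * (if q = v then (1:ℝ) else 0)) :=
    fun p => by rw [Finset.mul_sum]
  rw [Finset.sum_congr rfl fun p _ => h1 p, ← Finset.mul_sum]
  exact congrArg (fun Z => K * Z) (offdiag_collapse u v)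

end TVAux

set_option maxHeartbeats 4000000 in
/-- **Theorem (subcritical contraction in total variation).**
Fix a positive integer `k`.  For every `c` with `0 < c < 1` and all `x⃗, y⃗ ∈ D`,
`TV(Ψ_c(x⃗), Ψ_c(y⃗)) ≤ c · TV(x⃗, y⃗)`. -/
theorem tv_contraction_subcritical (k : ℕ) (hk : 0 < k) [Fintype (TreeClass k)]
    (c : ℝ) (hc0 : 0 < c) (hc1 : c < 1)
    (x y : TreeClass k → ℝ) (hx : x ∈ simplexD k) (hy : y ∈ simplexD k) :
    tvDist (PsiMap k c x) (PsiMap k c y) ≤ c * tvDist x y := by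
  classical
  obtain ⟨hx0, hx1⟩ := hx
  obtain ⟨hy0, hy1⟩ := hy
  set T : ℝ := tvDist x y with hT
  have hT0 : 0 ≤ T := by
    rw [hT]; unfold tvDist
    exact div_nonneg (Finset.sum_nonneg fun j _ => abs_nonneg _) (by norm_num)
  set mm : TreeClass k → ℝ := fun i => min (x i) (y i) with hmm
  have hmm0 : ∀ i, 0 ≤ mm i := fun i => le_min (hx0 i) (hy0 i)
  set r : TreeClass k → ℝ := fun i => x i - mm i with hrdef
  set s : TreeClass k → ℝ := fun i => y i - mm i with hsdef
  have hr0 : ∀ i, 0 ≤ r i := fun i => sub_nonneg.mpr (min_le_left _ _)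
  have hs0 : ∀ i, 0 ≤ s i := fun i => sub_nonneg.mpr (min_le_right _ _)
  have habs : ∀ i, r i + s i = |x i - y i| := by
    intro i
    simp only [hrdef, hsdef, hmm]
    rcases le_total (x i) (y i) with h | h
    · rw [min_eq_left h, abs_of_nonpos (by linarith)]; ring
    · rw [min_eq_right h, abs_of_nonneg (by linarith)]; ring
  have h2T : ∑ i, |x i - y i| = 2 * T := by rw [hT]; unfold tvDist; ring
  have hrs : ∑ i, r i = ∑ i, s i := by
    have h1 : ∑ i, r i - ∑ i, s i = 0 := by
      rw [← Finset.sum_sub_distrib]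
      have h2 : ∀ i, r i - s i = x i - y i := by
        intro i; simp only [hrdef, hsdef]; ring
      rw [Finset.sum_congr rfl fun i _ => h2 i, Finset.sum_sub_distrib, hx1, hy1]
      ring
    linarith
  have hsr : ∑ i, r i = T := by
    have h1 : ∑ i, (r i + s i) = 2 * T := by
      rw [Finset.sum_congr rfl fun i _ => habs i, h2T]
    rw [Finset.sum_add_distrib] at h1
    linarith
  have hss : ∑ i, s i = T := by linarith
  set w : TreeClass k → TreeClass k → ℝ := fun i i' => c * r i * s i' / T with hwdef
  have hw0 : ∀ i i', 0 ≤ w i i' := by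
    intro i i'
    simp only [hwdef]
    exact div_nonneg (mul_nonneg (mul_nonneg hc0.le (hr0 i)) (hs0 i')) hT0
  have hrowsum : ∀ i, ∑ i', w i i' = c * r i := by
    intro i
    by_cases hTz : T = 0
    · have hri : r i = 0 := by
        have hle : r i ≤ ∑ i', r i' :=
          Finset.single_le_sum (fun j _ => hr0 j) (Finset.mem_univ i)
        have := hr0 i
        rw [hsr, hTz] at hle
        linarith
      have hww : ∀ i', w i i' = 0 := by
        intro i'; simp only [hwdef, hri]; ring
      rw [Finset.sum_congr rfl fun i' _ => hww i', hri]
      simp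
    · have h1 : ∀ i', w i i' = (c * r i / T) * s i' := by
        intro i'; simp only [hwdef]; ring
      rw [Finset.sum_congr rfl fun i' _ => h1 i', ← Finset.mul_sum, hss]
      field_simp
  have hcolsum : ∀ i', ∑ i, w i i' = c * s i' := by
    intro i'
    by_cases hTz : T = 0
    · have hsi : s i' = 0 := by
        have hle : s i' ≤ ∑ j, s j :=
          Finset.single_le_sum (fun j _ => hs0 j) (Finset.mem_univ i')
        have := hs0 i'
        rw [hss, hTz] at hle
        linarith
      have hww : ∀ i, w i i' = 0 := by
        intro i; simp only [hwdef, hsi]; ring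
      rw [Finset.sum_congr rfl fun i _ => hww i, hsi]
      simp
    · have h1 : ∀ i, w i i' = (c * s i' / T) * r i := by
        intro i; simp only [hwdef]; ring
      rw [Finset.sum_congr rfl fun i _ => h1 i, ← Finset.mul_sum, hsr]
      field_simp
  have hssw : ∑ i, ∑ i', w i i' = c * T := by
    rw [Finset.sum_congr rfl fun i _ => hrowsum i, ← Finset.mul_sum, hsr]
  have hratex : ∀ i, c * mm i + ∑ i', w i i' = c * x i := by
    intro i; rw [hrowsum i]; simp only [hrdef]; ring
  have hratey : ∀ i, c * mm i + ∑ i', w i' i = c * y i := by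
    intro i; rw [hcolsum i]; simp only [hsdef]; ring
  -- the coupling measure
  set W : (TreeClass k → Fin (k+1)) → (TreeClass k → Fin (k+1)) → ℝ := fun α β =>
    ∑ a : TreeClass k → Fin (k+1), ∑ b : TreeClass k → TreeClass k → Fin (k+1),
      ((∏ i, poisTrunc (c * mm i) k ((a i : ℕ))) *
        (∏ i, ∏ i', poisTrunc (w i i') k ((b i i' : ℕ)))) *
      ((∏ i, (if min ((a i : ℕ) + ∑ i', ((b i i') : ℕ)) k = ((α i) : ℕ) then (1:ℝ) else 0)) *
       (∏ i, (if min ((a i : ℕ) + ∑ i', ((b i' i) : ℕ)) k = ((β i) : ℕ) then (1:ℝ) else 0)))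
    with hWdef
  have hKnn : ∀ (a : TreeClass k → Fin (k+1)) (b : TreeClass k → TreeClass k → Fin (k+1)),
      0 ≤ (∏ i, poisTrunc (c * mm i) k ((a i : ℕ))) *
        (∏ i, ∏ i', poisTrunc (w i i') k ((b i i' : ℕ))) := by
    intro a b
    apply mul_nonneg
    · exact Finset.prod_nonneg fun i _ => poisTrunc_nonneg' (mul_nonneg hc0.le (hmm0 i)) _
    · exact Finset.prod_nonneg fun i _ => Finset.prod_nonneg fun i' _ =>
        poisTrunc_nonneg' (hw0 i i') _
  have hWnn : ∀ p q, 0 ≤ W p q := by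
    intro p q
    simp only [hWdef]
    refine Finset.sum_nonneg fun a _ => Finset.sum_nonneg fun b _ => mul_nonneg (hKnn a b) ?_
    apply mul_nonneg <;>
      exact Finset.prod_nonneg fun i _ => by split_ifs <;> norm_num
  -- marginals of the coupling
  have hμ : ∀ α, ∑ β, W α β = ∏ i, poisTrunc (c * x i) k ((α i : ℕ)) := by
    intro α
    simp only [hWdef]
    rw [Finset.sum_comm]
    have inner : ∀ (a : TreeClass k → Fin (k+1)),
        (∑ β : TreeClass k → Fin (k+1), ∑ b : TreeClass k → TreeClass k → Fin (k+1),
          ((∏ i, poisTrunc (c * mm i) k ((a i : ℕ))) *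
            (∏ i, ∏ i', poisTrunc (w i i') k ((b i i' : ℕ)))) *
          ((∏ i, (if min ((a i:ℕ) + ∑ i', ((b i i'):ℕ)) k = ((α i):ℕ) then (1:ℝ) else 0)) *
           (∏ i, (if min ((a i:ℕ) + ∑ i', ((b i' i):ℕ)) k = ((β i):ℕ) then (1:ℝ) else 0))))
        = ∑ b : TreeClass k → TreeClass k → Fin (k+1),
          ((∏ i, poisTrunc (c * mm i) k ((a i:ℕ))) *
            (∏ i, ∏ i', poisTrunc (w i i') k ((b i i':ℕ)))) *
          (∏ i, (if min ((a i:ℕ) + ∑ i', ((b i i'):ℕ)) k = ((α i):ℕ) then (1:ℝ) else 0)) := by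
      intro a
      rw [Finset.sum_comm]
      refine Finset.sum_congr rfl fun b _ => ?_
      rw [← Finset.mul_sum, ← Finset.mul_sum]
      rw [sum_prod_ind (fun i => min ((a i:ℕ) + ∑ i', ((b i' i):ℕ)) k)
        (fun i => min_le_right _ _), mul_one]
    rw [Finset.sum_congr rfl fun a _ => inner a]
    rw [marginal_calc (fun i => c * mm i) w α]
    exact Finset.prod_congr rfl fun i _ => by rw [hratex i]
  have hν : ∀ β, ∑ α, W α β = ∏ i, poisTrunc (c * y i) k ((β i : ℕ)) := by
    intro β
    simp only [hWdef]
    rw [Finset.sum_comm]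
    rw [Finset.sum_congr rfl fun a _ => Finset.sum_comm]
    have inner : ∀ (a : TreeClass k → Fin (k+1)) (b : TreeClass k → TreeClass k → Fin (k+1)),
        (∑ α : TreeClass k → Fin (k+1),
          ((∏ i, poisTrunc (c * mm i) k ((a i : ℕ))) *
            (∏ i, ∏ i', poisTrunc (w i i') k ((b i i' : ℕ)))) *
          ((∏ i, (if min ((a i:ℕ) + ∑ i', ((b i i'):ℕ)) k = ((α i):ℕ) then (1:ℝ) else 0)) *
           (∏ i, (if min ((a i:ℕ) + ∑ i', ((b i' i):ℕ)) k = ((β i):ℕ) then (1:ℝ) else 0))))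
        = ((∏ i, poisTrunc (c * mm i) k ((a i:ℕ))) *
            (∏ i, ∏ i', poisTrunc (w i i') k ((b i i':ℕ)))) *
          (∏ i, (if min ((a i:ℕ) + ∑ i', ((b i' i):ℕ)) k = ((β i):ℕ) then (1:ℝ) else 0)) := by
      intro a b
      rw [← Finset.mul_sum]
      congr 1
      rw [← Finset.sum_mul]
      rw [sum_prod_ind (fun i => min ((a i:ℕ) + ∑ i', ((b i i'):ℕ)) k)
        (fun i => min_le_right _ _), one_mul]
    rw [Finset.sum_congr rfl fun a _ => Finset.sum_congr rfl fun b _ => inner a b]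
    have step2 : ∀ a : TreeClass k → Fin (k+1),
        (∑ b : TreeClass k → TreeClass k → Fin (k+1),
          ((∏ i, poisTrunc (c * mm i) k ((a i:ℕ))) *
            (∏ i, ∏ i', poisTrunc (w i i') k ((b i i':ℕ)))) *
          (∏ i, (if min ((a i:ℕ) + ∑ i', ((b i' i):ℕ)) k = ((β i):ℕ) then (1:ℝ) else 0)))
        = ∑ b : TreeClass k → TreeClass k → Fin (k+1),
          ((∏ i, poisTrunc (c * mm i) k ((a i:ℕ))) *
            (∏ i, ∏ i', poisTrunc (w i' i) k ((b i i':ℕ)))) *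
          (∏ i, (if min ((a i:ℕ) + ∑ i', ((b i i'):ℕ)) k = ((β i):ℕ) then (1:ℝ) else 0)) := by
      intro a
      rw [← Equiv.sum_comp (⟨fun b i i' => b i' i, fun b i i' => b i' i,
          fun b => rfl, fun b => rfl⟩ :
          (TreeClass k → TreeClass k → Fin (k+1)) ≃ (TreeClass k → TreeClass k → Fin (k+1)))
        (fun b : TreeClass k → TreeClass k → Fin (k+1) =>
        ((∏ i, poisTrunc (c * mm i) k ((a i:ℕ))) *
            (∏ i, ∏ i', poisTrunc (w i i') k ((b i i':ℕ)))) *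
          (∏ i, (if min ((a i:ℕ) + ∑ i', ((b i' i):ℕ)) k = ((β i):ℕ) then (1:ℝ) else 0)))]
      refine Finset.sum_congr rfl fun b _ => ?_
      have e1 : (∏ i, ∏ i', poisTrunc (w i i') k ((b i' i : ℕ)))
          = ∏ i, ∏ i', poisTrunc (w i' i) k ((b i i' : ℕ)) := Finset.prod_comm
      exact congrArg (fun Z => ((∏ i, poisTrunc (c * mm i) k ((a i:ℕ))) * Z) *
        (∏ i, (if min ((a i:ℕ) + ∑ i', ((b i i'):ℕ)) k = ((β i):ℕ) then (1:ℝ) else 0))) e1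
    rw [Finset.sum_congr rfl fun a _ => step2 a]
    rw [marginal_calc (fun i => c * mm i) (fun i i' => w i' i) β]
    exact Finset.prod_congr rfl fun i _ => by rw [hratey i]
  -- step 1 : pushforward contraction
  have key1 : tvDist (PsiMap k c x) (PsiMap k c y)
      ≤ tvDist (fun α : TreeClass k → Fin (k+1) => ∏ i, poisTrunc (c * x i) k ((α i : ℕ)))
          (fun α : TreeClass k → Fin (k+1) => ∏ i, poisTrunc (c * y i) k ((α i : ℕ))) :=
    tvDist_push (fun α : TreeClass k → Fin (k+1) => recursionFun k (fun i => ((α i) : ℕ)))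
      (fun α => ∏ i, poisTrunc (c * x i) k ((α i : ℕ)))
      (fun α => ∏ i, poisTrunc (c * y i) k ((α i : ℕ)))
  -- step 2 : coupling bound
  have key2 : tvDist (fun α : TreeClass k → Fin (k+1) => ∏ i, poisTrunc (c * x i) k ((α i : ℕ)))
      (fun α : TreeClass k → Fin (k+1) => ∏ i, poisTrunc (c * y i) k ((α i : ℕ)))
      ≤ ∑ p : TreeClass k → Fin (k+1), ∑ q : TreeClass k → Fin (k+1),
          if p = q then 0 else W p q :=
    tvDist_le_offdiag W hWnn _ _ hμ hν
  -- step 3 : off-diagonal mass is at most 1 - exp(-cT)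
  have key3 : (∑ p : TreeClass k → Fin (k+1), ∑ q : TreeClass k → Fin (k+1),
      if p = q then 0 else W p q) ≤ 1 - Real.exp (-(c * T)) := by
    have expand : ∀ (p q : TreeClass k → Fin (k+1)), (if p = q then (0:ℝ) else W p q)
        = ∑ a : TreeClass k → Fin (k+1), ∑ b : TreeClass k → TreeClass k → Fin (k+1),
          ((∏ i, poisTrunc (c * mm i) k ((a i : ℕ))) *
            (∏ i, ∏ i', poisTrunc (w i i') k ((b i i' : ℕ)))) *
          (if p = q then (0:ℝ) else
            ((∏ i, (if min ((a i:ℕ) + ∑ i', ((b i i'):ℕ)) k = ((p i):ℕ) then (1:ℝ) else 0)) *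
             (∏ i, (if min ((a i:ℕ) + ∑ i', ((b i' i):ℕ)) k = ((q i):ℕ) then (1:ℝ) else 0)))) := by
      intro p q
      split_ifs with h
      · simp
      · simp only [hWdef]
    rw [Finset.sum_congr rfl fun p _ => Finset.sum_congr rfl fun q _ => expand p q]
    rw [Finset.sum_congr rfl fun p _ => Finset.sum_comm]
    rw [Finset.sum_comm]
    rw [Finset.sum_congr rfl fun a _ => Finset.sum_congr rfl fun p _ => Finset.sum_comm]
    rw [Finset.sum_congr rfl fun a _ => Finset.sum_comm]
    -- now the sums are ordered  a, b, p, q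
    have collapse : ∀ (a : TreeClass k → Fin (k+1)) (b : TreeClass k → TreeClass k → Fin (k+1)),
        (∑ p : TreeClass k → Fin (k+1), ∑ q : TreeClass k → Fin (k+1),
          ((∏ i, poisTrunc (c * mm i) k ((a i : ℕ))) *
            (∏ i, ∏ i', poisTrunc (w i i') k ((b i i' : ℕ)))) *
          (if p = q then (0:ℝ) else
            ((∏ i, (if min ((a i:ℕ) + ∑ i', ((b i i'):ℕ)) k = ((p i):ℕ) then (1:ℝ) else 0)) *
             (∏ i, (if min ((a i:ℕ) + ∑ i', ((b i' i):ℕ)) k = ((q i):ℕ) then (1:ℝ) else 0)))))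
        = ((∏ i, poisTrunc (c * mm i) k ((a i : ℕ))) *
            (∏ i, ∏ i', poisTrunc (w i i') k ((b i i' : ℕ)))) *
          (if (fun i => (⟨min ((a i:ℕ) + ∑ i', ((b i i'):ℕ)) k,
                Nat.lt_succ_of_le (min_le_right _ _)⟩ : Fin (k+1)))
            = (fun i => (⟨min ((a i:ℕ) + ∑ i', ((b i' i):ℕ)) k,
                Nat.lt_succ_of_le (min_le_right _ _)⟩ : Fin (k+1))) then (0:ℝ) else 1) := by
      intro a b
      have hre : ∀ (p q : TreeClass k → Fin (k+1)),
          ((∏ i, poisTrunc (c * mm i) k ((a i : ℕ))) *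
            (∏ i, ∏ i', poisTrunc (w i i') k ((b i i' : ℕ)))) *
          (if p = q then (0:ℝ) else
            ((∏ i, (if min ((a i:ℕ) + ∑ i', ((b i i'):ℕ)) k = ((p i):ℕ) then (1:ℝ) else 0)) *
             (∏ i, (if min ((a i:ℕ) + ∑ i', ((b i' i):ℕ)) k = ((q i):ℕ) then (1:ℝ) else 0))))
          = ((∏ i, poisTrunc (c * mm i) k ((a i : ℕ))) *
            (∏ i, ∏ i', poisTrunc (w i i') k ((b i i' : ℕ)))) *
          (if p = q then (0:ℝ) else
            (if p = (fun i => (⟨min ((a i:ℕ) + ∑ i', ((b i i'):ℕ)) k,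
                Nat.lt_succ_of_le (min_le_right _ _)⟩ : Fin (k+1))) then (1:ℝ) else 0) *
            (if q = (fun i => (⟨min ((a i:ℕ) + ∑ i', ((b i' i):ℕ)) k,
                Nat.lt_succ_of_le (min_le_right _ _)⟩ : Fin (k+1))) then (1:ℝ) else 0)) := by
        intro p q
        rw [prod_ind_eq (fun i => min ((a i:ℕ) + ∑ i', ((b i i'):ℕ)) k)
            (fun i => min_le_right _ _) p,
          prod_ind_eq (fun i => min ((a i:ℕ) + ∑ i', ((b i' i):ℕ)) k)
            (fun i => min_le_right _ _) q]
      rw [Finset.sum_congr rfl fun p _ => Finset.sum_congr rfl fun q _ => hre p q]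
      exact offdiag_collapse2 _ _ _
    rw [Finset.sum_congr rfl fun a _ => Finset.sum_congr rfl fun b _ => collapse a b]
    -- bound the disagreement indicator by the event that some b is nonzero
    have hble : ∀ (a : TreeClass k → Fin (k+1)) (b : TreeClass k → TreeClass k → Fin (k+1)),
        ((∏ i, poisTrunc (c * mm i) k ((a i : ℕ))) *
            (∏ i, ∏ i', poisTrunc (w i i') k ((b i i' : ℕ)))) *
          (if (fun i => (⟨min ((a i:ℕ) + ∑ i', ((b i i'):ℕ)) k,
                Nat.lt_succ_of_le (min_le_right _ _)⟩ : Fin (k+1)))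
            = (fun i => (⟨min ((a i:ℕ) + ∑ i', ((b i' i):ℕ)) k,
                Nat.lt_succ_of_le (min_le_right _ _)⟩ : Fin (k+1))) then (0:ℝ) else 1)
        ≤ ((∏ i, poisTrunc (c * mm i) k ((a i : ℕ))) *
            (∏ i, ∏ i', poisTrunc (w i i') k ((b i i' : ℕ)))) *
          (if b = (fun _ _ => (0 : Fin (k+1))) then (0:ℝ) else 1) := by
      intro a b
      refine mul_le_mul_of_nonneg_left ?_ (hKnn a b)
      by_cases hb : b = (fun _ _ => (0 : Fin (k+1)))
      · subst hb
        rw [if_pos rfl, if_pos]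
        funext i
        simp
      · rw [if_neg hb]
        split_ifs <;> norm_num
    refine (Finset.sum_le_sum fun a _ => Finset.sum_le_sum fun b _ => hble a b).trans ?_
    have hsplit : ∀ (a : TreeClass k → Fin (k+1)) (b : TreeClass k → TreeClass k → Fin (k+1)),
        ((∏ i, poisTrunc (c * mm i) k ((a i : ℕ))) *
            (∏ i, ∏ i', poisTrunc (w i i') k ((b i i' : ℕ)))) *
          (if b = (fun _ _ => (0 : Fin (k+1))) then (0:ℝ) else 1)
        = (∏ i, poisTrunc (c * mm i) k ((a i : ℕ))) *
            ((∏ i, ∏ i', poisTrunc (w i i') k ((b i i' : ℕ))) *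
              (if b = (fun _ _ => (0 : Fin (k+1))) then (0:ℝ) else 1)) := fun a b => by ring
    rw [Finset.sum_congr rfl fun a _ => Finset.sum_congr rfl fun b _ => hsplit a b]
    have hpull : ∀ a : TreeClass k → Fin (k+1),
        (∑ b : TreeClass k → TreeClass k → Fin (k+1),
          (∏ i, poisTrunc (c * mm i) k ((a i : ℕ))) *
            ((∏ i, ∏ i', poisTrunc (w i i') k ((b i i' : ℕ))) *
              (if b = (fun _ _ => (0 : Fin (k+1))) then (0:ℝ) else 1)))
        = (∏ i, poisTrunc (c * mm i) k ((a i : ℕ))) *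
            (∑ b : TreeClass k → TreeClass k → Fin (k+1),
              (∏ i, ∏ i', poisTrunc (w i i') k ((b i i' : ℕ))) *
                (if b = (fun _ _ => (0 : Fin (k+1))) then (0:ℝ) else 1)) :=
      fun a => by rw [Finset.mul_sum]
    rw [Finset.sum_congr rfl fun a _ => hpull a, ← Finset.sum_mul]
    have hA : (∑ a : TreeClass k → Fin (k+1), ∏ i, poisTrunc (c * mm i) k ((a i:ℕ))) = 1 := by
      rw [sum_prod_fun (fun i (z : Fin (k+1)) => poisTrunc (c * mm i) k ((z:ℕ)))]
      rw [Finset.prod_congr rfl fun i _ => sum_poisTrunc (c * mm i)]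
      simp
    rw [hA, one_mul]
    have hBsum : (∑ b : TreeClass k → TreeClass k → Fin (k+1),
        ∏ i, ∏ i', poisTrunc (w i i') k ((b i i':ℕ))) = 1 := by
      rw [sum_prod_fun (fun i (z : TreeClass k → Fin (k+1)) =>
        ∏ i', poisTrunc (w i i') k ((z i':ℕ)))]
      have hin : ∀ i, (∑ z : TreeClass k → Fin (k+1),
          ∏ i', poisTrunc (w i i') k ((z i':ℕ))) = 1 := by
        intro i
        rw [sum_prod_fun (fun i' (zz : Fin (k+1)) => poisTrunc (w i i') k ((zz:ℕ)))]
        rw [Finset.prod_congr rfl fun i' _ => sum_poisTrunc (w i i')]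
        simp
      rw [Finset.prod_congr rfl fun i _ => hin i]
      simp
    have hB0 : (∏ i, ∏ i', poisTrunc (w i i') k ((((fun _ _ => (0 : Fin (k+1)))
          : TreeClass k → TreeClass k → Fin (k+1)) i i' : ℕ)))
        = Real.exp (-(c * T)) := by
      have h1 : ∀ (i i' : TreeClass k), poisTrunc (w i i') k (((0 : Fin (k+1)) : ℕ))
          = Real.exp (-(w i i')) := by
        intro i i'
        have h0 : (((0 : Fin (k+1))) : ℕ) = 0 := rfl
        rw [h0, poisTrunc_zero_apply hk]
      rw [Finset.prod_congr rfl fun i _ => Finset.prod_congr rfl fun i' _ => h1 i i']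
      rw [Finset.prod_congr rfl fun i _ => (Real.exp_sum Finset.univ (fun i' => -(w i i'))).symm]
      rw [← Real.exp_sum]
      congr 1
      have h2 : ∀ i : TreeClass k, ∑ i', -(w i i') = -(∑ i', w i i') :=
        fun i => Finset.sum_neg_distrib _
      rw [Finset.sum_congr rfl fun i _ => h2 i, Finset.sum_neg_distrib, hssw]
    have hfinal : (∑ b : TreeClass k → TreeClass k → Fin (k+1),
        (∏ i, ∏ i', poisTrunc (w i i') k ((b i i':ℕ))) *
          (if b = (fun _ _ => (0 : Fin (k+1))) then (0:ℝ) else 1))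
        = 1 - Real.exp (-(c * T)) := by
      have h1 : ∀ b : TreeClass k → TreeClass k → Fin (k+1),
          (∏ i, ∏ i', poisTrunc (w i i') k ((b i i':ℕ))) *
            (if b = (fun _ _ => (0 : Fin (k+1))) then (0:ℝ) else 1)
          = (∏ i, ∏ i', poisTrunc (w i i') k ((b i i':ℕ)))
            - (if b = (fun _ _ => (0 : Fin (k+1)))
                then (∏ i, ∏ i', poisTrunc (w i i') k ((b i i':ℕ))) else 0) := by
        intro b; split_ifs <;> ring
      rw [Finset.sum_congr rfl fun b _ => h1 b, Finset.sum_sub_distrib, hBsum]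
      rw [Finset.sum_ite_eq' Finset.univ
        ((fun _ _ => (0 : Fin (k+1))) : TreeClass k → TreeClass k → Fin (k+1))
        (fun b => ∏ i, ∏ i', poisTrunc (w i i') k ((b i i':ℕ)))]
      rw [if_pos (Finset.mem_univ _), hB0]
    rw [hfinal]
  have key4 : 1 - Real.exp (-(c * T)) ≤ c * T := by
    have h := Real.add_one_le_exp (-(c * T))
    linarith
  exact le_trans key1 (le_trans key2 (le_trans key3 key4))

end RTree
end
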